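/- arXiv:1301.2492 — 7 statements merged into one kernel-verified Lean document; each statement's English description precedes it below -/
import Mathlib

section
/- Uniqueness lemma (algebraic core). Let G ∈ Mat_n(ℝ) be symmetric and invertible and let L ∈ Mat_n(ℝ) be G-selfadjoint (Lᵀ G = G L) and regular, meaning that for every complex eigenvalue μ of L one has dim_ℂ ker(L − μ·I) = 1 (equivalently, the minimal polynomial of L equals its characteristic polynomial). If B ∈ Mat_n(ℝ) satisfies B L = L B and Bᵀ G + G B = 0 (B is G-skew-adjoint), then B = 0. -/
open Polynomial Module LinearMap

section Cyclic
variable {K V : Type*} [Field K] [AddCommGroup V] [Module K V]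

/-- The linear map `p ↦ p(f) v`. -/
noncomputable def orbitMap (f : Module.End K V) (v : V) : Polynomial K →ₗ[K] V where
  toFun p := Polynomial.aeval f p v
  map_add' p q := by simp
  map_smul' c p := by simp

@[simp] lemma orbitMap_apply (f : Module.End K V) (v : V) (p : K[X]) :
    orbitMap f v p = Polynomial.aeval f p v := rfl

lemma orbit_aeval_le (f : Module.End K V) (v : V) (q : K[X]) :
    LinearMap.range (orbitMap (Polynomial.aeval f q) v) ≤ LinearMap.range (orbitMap f v) := by
  rintro x ⟨p, rfl⟩
  exact ⟨p.comp q, by simp [Polynomial.aeval_comp]⟩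

variable [FiniteDimensional K V]

lemma finrank_ker_pow_le (f : Module.End K V) (h : finrank K (ker f) ≤ 1) (k : ℕ) :
    finrank K (ker (f ^ k)) ≤ k := by
  induction k with
  | zero =>
    have : ker (f ^ 0) = ⊥ := by
      rw [pow_zero]
      exact LinearMap.ker_eq_bot.mpr fun a b hab => by simpa using hab
    rw [this]; simp
  | succ k ih =>
    set g : ker (f ^ (k+1)) →ₗ[K] V := f.comp (ker (f ^ (k+1))).subtype with hg
    have hrange : LinearMap.range g ≤ ker (f ^ k) := by
      rintro y ⟨⟨x, hx⟩, rfl⟩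
      have : (f ^ (k+1)) x = 0 := hx
      simpa [hg, pow_succ, Module.End.mul_apply] using this
    have hker : finrank K (ker g) ≤ 1 := by
      have : finrank K (ker g) = finrank K (Submodule.map (ker (f ^ (k+1))).subtype (ker g)) :=
        (Submodule.finrank_map_subtype_eq _ _).symm
      rw [this]
      refine le_trans (Submodule.finrank_mono ?_) h
      rintro y ⟨⟨x, hx⟩, hxg, rfl⟩
      simpa [hg] using hxg
    have := finrank_range_add_finrank_ker g
    have h1 : finrank K (LinearMap.range g) ≤ k := le_trans (Submodule.finrank_mono hrange) ih
    omega

lemma indep_of_pow_ne_zero (f : Module.End K V) (e' : ℕ) (he : f ^ (e'+1) = 0) (v : V)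
    (hv : (f ^ e') v ≠ 0) : LinearIndependent K (fun i : Fin (e'+1) => (f ^ (i : ℕ)) v) := by
  rw [Fintype.linearIndependent_iff]
  intro g hsum
  suffices H : ∀ m, ∀ (hm : m < e'+1), g ⟨m, hm⟩ = 0 by
    intro i
    have := H i.1 i.2
    simpa using this
  intro m
  induction m using Nat.strong_induction_on with
  | _ m ih =>
  intro hm
  have h0 : (f ^ (e' - m)) (∑ j : Fin (e'+1), g j • (f ^ (j:ℕ)) v) = 0 := by
    rw [hsum]; simp
  rw [map_sum] at h0
  have hterm : ∀ j : Fin (e'+1), j ≠ ⟨m, hm⟩ →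
      (f ^ (e' - m)) (g j • (f ^ (j:ℕ)) v) = 0 := by
    intro j hj
    have hjm : (j : ℕ) ≠ m := fun hc => hj (Fin.ext hc)
    rcases lt_or_gt_of_ne hjm with hlt | hgt
    · have : g j = 0 := by have := ih j.1 hlt j.2; simpa using this
      rw [this]; simp
    · have h1 : (f ^ (e' - m)) ((f ^ (j:ℕ)) v) = (f ^ (e' - m + (j:ℕ))) v := by
        rw [pow_add]; rfl
      have hz : f ^ (e' - m + (j:ℕ)) = 0 := by
        apply pow_eq_zero_of_le _ he
        omega
      rw [map_smul, h1, hz]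
      simp
  rw [Finset.sum_eq_single ⟨m, hm⟩] at h0
  · have h1 : (f ^ (e' - m)) ((f ^ m) v) = (f ^ e') v := by
      rw [← Module.End.mul_apply, ← pow_add]
      congr 2
      omega
    rw [map_smul] at h0
    simp only [] at h0
    rw [h1] at h0
    rcases smul_eq_zero.mp h0 with h | h
    · exact h
    · exact absurd h hv
  · exact fun j _ hj => hterm j hj
  · intro h; exact absurd (Finset.mem_univ _) h


lemma nilpotent_exists_cyclic {K V : Type*} [Field K] [AddCommGroup V] [Module K V]
    [FiniteDimensional K V] (f : Module.End K V) (hn : IsNilpotent f)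
    (h1 : finrank K (ker f) ≤ 1) :
    ∃ v : V, LinearMap.range (orbitMap f v) = ⊤ := by
  classical
  obtain ⟨e, he⟩ := hn
  -- reduce to minimal exponent
  have hex : ∃ e, f ^ e = 0 := ⟨e, he⟩
  have he0 : f ^ (Nat.find hex) = 0 := Nat.find_spec hex
  rcases Nat.eq_zero_or_pos (Nat.find hex) with h0 | hpos
  · -- f^0 = 1 = 0, so V is trivial
    rw [h0, pow_zero] at he0
    have hsub : Subsingleton V := by
      constructor
      intro a b
      have ha : a = 0 := by have := LinearMap.ext_iff.mp he0 a; simpa using this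
      have hb : b = 0 := by have := LinearMap.ext_iff.mp he0 b; simpa using this
      rw [ha, hb]
    exact ⟨0, Subsingleton.elim _ _⟩
  · obtain ⟨e', he'⟩ : ∃ e', Nat.find hex = e' + 1 := ⟨Nat.find hex - 1, by omega⟩
    rw [he'] at he0
    have hne : f ^ e' ≠ 0 := Nat.find_min hex (by omega)
    obtain ⟨v, hv⟩ : ∃ v, (f ^ e') v ≠ 0 := by
      by_contra hc
      push_neg at hc
      exact hne (LinearMap.ext fun x => by simpa using hc x)
    refine ⟨v, ?_⟩
    have hindep := indep_of_pow_ne_zero f e' he0 v hv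
    have hspan := finrank_span_eq_card hindep
    have hd : finrank K V ≤ e' + 1 := by
      have h2 := finrank_ker_pow_le f h1 (e' + 1)
      have h3 : ker (f ^ (e' + 1)) = ⊤ := by rw [he0]; exact LinearMap.ker_zero
      rw [h3, finrank_top] at h2
      exact h2
    have hle : Submodule.span K (Set.range fun i : Fin (e'+1) => (f ^ (i:ℕ)) v)
        ≤ LinearMap.range (orbitMap f v) := by
      rw [Submodule.span_le]
      rintro x ⟨i, rfl⟩
      exact ⟨X ^ (i : ℕ), by simp⟩
    apply Submodule.eq_top_of_finrank_eq
    have hge : e' + 1 ≤ finrank K (LinearMap.range (orbitMap f v)) := by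
      have := Submodule.finrank_mono (t := LinearMap.range (orbitMap f v)) hle
      rw [hspan] at this
      simpa using this
    have hle2 : finrank K (LinearMap.range (orbitMap f v)) ≤ finrank K V :=
      Submodule.finrank_le _
    omega

lemma coe_aeval_restrict {K V : Type*} [Field K] [AddCommGroup V] [Module K V]
    (f : Module.End K V) (W : Submodule K V) (hW : ∀ x ∈ W, f x ∈ W)
    (p : K[X]) (x : W) :
    ((Polynomial.aeval (f.restrict hW) p x : W) : V) = Polynomial.aeval f p (x : V) := by
  induction p using Polynomial.induction_on generalizing x with
  | C a => simp [Module.algebraMap_end_apply]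
  | add p q hp hq => simp [hp, hq]
  | monomial m a ih =>
    have key : (C a * X ^ (m + 1)) = (C a * X ^ m) * X := by ring
    rw [key]
    have l1 := map_mul (Polynomial.aeval (f.restrict hW)) (C a * X ^ m) X
    have l2 := map_mul (Polynomial.aeval f) (C a * X ^ m) X
    rw [l1, l2]
    simp only [Module.End.mul_apply, Polynomial.aeval_X]
    rw [ih (f.restrict hW x)]
    rfl

lemma commutant_eq_aeval {K V : Type*} [Field K] [AddCommGroup V] [Module K V]
    (f g : Module.End K V) (v : V) (hcyc : LinearMap.range (orbitMap f v) = ⊤)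
    (hcomm : Commute f g) :
    ∃ p : K[X], g = Polynomial.aeval f p := by
  have hgv : g v ∈ LinearMap.range (orbitMap f v) := hcyc ▸ Submodule.mem_top
  obtain ⟨p, hp⟩ := hgv
  simp only [orbitMap_apply] at hp
  refine ⟨p, ?_⟩
  have hcg : ∀ r : K[X], Commute g (Polynomial.aeval f r) := by
    intro r
    induction r using Polynomial.induction_on with
    | C a =>
      rw [Polynomial.aeval_C]
      exact (Algebra.commutes a g).symm
    | add p q hp hq => simpa [map_add] using hp.add_right hq
    | monomial m a ih =>
      have key : (C a * X ^ (m+1)) = (C a * X ^ m) * X := by ring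
      rw [key, map_mul, Polynomial.aeval_X]
      exact ih.mul_right hcomm.symm
  ext x
  have hx : x ∈ LinearMap.range (orbitMap f v) := hcyc ▸ Submodule.mem_top
  obtain ⟨q, rfl⟩ := hx
  simp only [orbitMap_apply]
  calc g ((Polynomial.aeval f q) v) = (Polynomial.aeval f q) (g v) := by
        have h := LinearMap.congr_fun (hcg q).eq v
        simpa [Module.End.mul_apply] using h
    _ = (Polynomial.aeval f q) ((Polynomial.aeval f p) v) := by rw [hp]
    _ = (Polynomial.aeval f (q * p)) v := by rw [map_mul]; rfl
    _ = (Polynomial.aeval f (p * q)) v := by rw [mul_comm]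
    _ = (Polynomial.aeval f p) ((Polynomial.aeval f q) v) := by rw [map_mul]; rfl
open Polynomial Module LinearMap

section B
variable {K V : Type*} [Field K] [AddCommGroup V] [Module K V]

lemma aeval_X_sub_C_pow (g : Module.End K V) (μ : K) (k : ℕ) :
    Polynomial.aeval g ((X - C μ)^k) = (g - μ • 1)^k := by
  rw [map_pow, map_sub, Polynomial.aeval_X, Polynomial.aeval_C]
  congr 1

variable [IsAlgClosed K] [FiniteDimensional K V]

lemma exists_cyclic_of_eigenspaces (f : Module.End K V)
    (h : ∀ μ : K, finrank K (f.eigenspace μ) ≤ 1) :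
    ∃ v : V, LinearMap.range (orbitMap f v) = ⊤ := by
  classical
  set E := f.maxGenEigenspace with hE
  have hmt : ∀ μ, ∀ x ∈ E μ, f x ∈ E μ :=
    fun μ x hx => f.mapsTo_maxGenEigenspace_of_comm (Commute.refl f) μ hx
  set F := fun μ => f.restrict (hmt μ) with hF
  set k := fun μ => f.maxUnifEigenspaceIndex μ with hk
  have hker : ∀ μ, E μ = ker ((f - μ • 1) ^ k μ) := by
    intro μ
    rw [hE, Module.End.maxGenEigenspace_eq, Module.End.genEigenspace_nat]
  -- nilpotency of the local nilpotent part
  have hNnil : ∀ μ, (F μ - μ • 1) ^ (k μ) = 0 := by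
    intro μ
    ext x
    have h1 : ((F μ - μ • 1) ^ (k μ)) x
        = Polynomial.aeval (F μ) ((X - C μ) ^ (k μ)) x := by
      rw [aeval_X_sub_C_pow]
    have h2 : ((Polynomial.aeval (F μ) ((X - C μ) ^ (k μ)) x : E μ) : V)
        = Polynomial.aeval f ((X - C μ) ^ (k μ)) (x : V) :=
      coe_aeval_restrict f (E μ) (hmt μ) _ x
    have h3 : Polynomial.aeval f ((X - C μ) ^ (k μ)) (x : V) = 0 := by
      rw [aeval_X_sub_C_pow]
      exact LinearMap.mem_ker.mp ((SetLike.ext_iff.mp (hker μ) (x : V)).mp x.2)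
    have : ((((F μ - μ • 1) ^ (k μ)) x : E μ) : V) = 0 := by rw [h1, h2, h3]
    simpa using this
  -- local kernels are small
  have hNker : ∀ μ, finrank K (ker (F μ - μ • 1)) ≤ 1 := by
    intro μ
    have e1 : ker (F μ - μ • 1) = Submodule.comap (E μ).subtype (ker (f - μ • 1)) := by
      have e2 : (Module.End.genEigenspace (F μ) μ) ((1:ℕ) : ℕ∞)
          = Submodule.comap (E μ).subtype ((f.genEigenspace μ) ((1:ℕ) : ℕ∞)) :=
        Module.End.genEigenspace_restrict f (E μ) ((1:ℕ) : ℕ∞) μ (hmt μ)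
      rw [Module.End.genEigenspace_nat, Module.End.genEigenspace_nat, pow_one, pow_one] at e2
      exact e2
    have e3 : ker (f - μ • 1) ≤ E μ := by
      intro z hz
      show z ∈ f.maxGenEigenspace μ
      rw [Module.End.mem_maxGenEigenspace]
      exact ⟨1, by simpa [pow_one] using hz⟩
    have e4 := LinearEquiv.finrank_eq (Submodule.comapSubtypeEquivOfLe e3)
    rw [e1, e4]
    have e5 : f.eigenspace μ = ker (f - μ • 1) := Module.End.eigenspace_def
    rw [← e5]
    exact h μ
  -- choose local cyclic vectors
  have hchoice : ∀ μ, ∃ u : E μ, LinearMap.range (orbitMap (F μ) u) = ⊤ := by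
    intro μ
    obtain ⟨u, hu⟩ := nilpotent_exists_cyclic (F μ - μ • 1) ⟨k μ, hNnil μ⟩ (hNker μ)
    refine ⟨u, top_le_iff.mp ?_⟩
    rw [← hu]
    have : F μ - μ • 1 = Polynomial.aeval (F μ) (X - C μ) := by
      have := aeval_X_sub_C_pow (F μ) μ 1
      simpa using this.symm
    rw [this]
    exact orbit_aeval_le (F μ) u (X - C μ)
  choose u hu using hchoice
  have hfin : {μ | E μ ≠ ⊥}.Finite :=
    WellFoundedGT.finite_ne_bot_of_iSupIndep f.independent_maxGenEigenspace
  set S := hfin.toFinset with hS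
  set v := ∑ μ ∈ S, ((u μ : V)) with hv
  refine ⟨v, top_le_iff.mp ?_⟩
  rw [← Module.End.iSup_maxGenEigenspace_eq_top f]
  apply iSup_le
  intro μ₀
  by_cases hbot : f.maxGenEigenspace μ₀ = ⊥
  · rw [hbot]
    exact bot_le
  have hSmem : μ₀ ∈ S := by rw [hS, Set.Finite.mem_toFinset]; exact hbot
  set q := ∏ ν ∈ S.erase μ₀, (X - C ν) ^ (k ν) with hq
  -- the projection-like vector w
  have hzero : ∀ ν ∈ S.erase μ₀, Polynomial.aeval f q ((u ν : V)) = 0 := by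
    intro ν hν
    have hfact : q = (∏ x ∈ (S.erase μ₀).erase ν, (X - C x) ^ (k x)) * (X - C ν) ^ (k ν) := by
      rw [mul_comm]
      exact (Finset.mul_prod_erase _ _ hν).symm
    rw [hfact, map_mul, Module.End.mul_apply]
    have : Polynomial.aeval f ((X - C ν) ^ (k ν)) ((u ν : V)) = 0 := by
      rw [aeval_X_sub_C_pow]
      exact LinearMap.mem_ker.mp ((SetLike.ext_iff.mp (hker ν) ((u ν : V))).mp (u ν).2)
    rw [this, map_zero]
  have hwv : Polynomial.aeval f q v = Polynomial.aeval f q ((u μ₀ : V)) := by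
    rw [hv, map_sum, Finset.sum_eq_single μ₀]
    · exact fun ν hν hne => hzero ν (Finset.mem_erase.mpr ⟨hne, hν⟩)
    · intro hc; exact absurd hSmem hc
  -- w as an element of E μ₀
  set w' : E μ₀ := Polynomial.aeval (F μ₀) q (u μ₀) with hw'
  have hw'coe : ((w' : E μ₀) : V) = Polynomial.aeval f q v := by
    rw [hw', coe_aeval_restrict f (E μ₀) (hmt μ₀) q (u μ₀), hwv]
  -- aeval (F μ₀) q is a unit
  have hunit : ∀ T : Finset K, μ₀ ∉ T →
      IsUnit (Polynomial.aeval (F μ₀) (∏ ν ∈ T, (X - C ν) ^ (k ν))) := by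
    intro T
    induction T using Finset.induction_on with
    | empty => intro _; simpa using isUnit_one
    | @insert ν T' hνT ih =>
      intro hμ
      rw [Finset.prod_insert hνT, map_mul]
      refine IsUnit.mul ?_ (ih (fun hc => hμ (Finset.mem_insert_of_mem hc)))
      rw [aeval_X_sub_C_pow]
      apply IsUnit.pow
      have hνμ : ν ≠ μ₀ := fun hc => hμ (hc ▸ Finset.mem_insert_self ν T')
      have hsum : F μ₀ - ν • 1 = (μ₀ - ν) • (1 : Module.End K (E μ₀)) + (F μ₀ - μ₀ • 1) := by
        have h9 : (μ₀ - ν) • (1 : Module.End K (E μ₀)) = μ₀ • 1 - ν • 1 := sub_smul μ₀ ν (1 : Module.End K (E μ₀))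
        rw [h9]; abel
      rw [hsum]
      refine IsNilpotent.isUnit_add_left_of_commute ⟨k μ₀, hNnil μ₀⟩ ?_ ?_
      · have : (μ₀ - ν) • (1 : Module.End K (E μ₀))
            = algebraMap K (Module.End K (E μ₀)) (μ₀ - ν) := by
          rw [Module.algebraMap_end_eq_smul_id]; rfl
        rw [this]
        exact (isUnit_iff_ne_zero.mpr (sub_ne_zero.mpr (fun hc => hνμ hc.symm))).map _
      · exact Commute.smul_right (Commute.one_right _) _
  have hqu := hunit (S.erase μ₀) (Finset.notMem_erase μ₀ S)
  rw [← hq] at hqu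
  -- w' is cyclic for F μ₀
  have hcycw : LinearMap.range (orbitMap (F μ₀) w') = ⊤ := by
    apply top_le_iff.mp
    intro x _
    set y := (↑hqu.unit⁻¹ : Module.End K (E μ₀)) x with hy
    have hxy : Polynomial.aeval (F μ₀) q y = x := by
      rw [hy, ← Module.End.mul_apply]
      have : Polynomial.aeval (F μ₀) q * (↑hqu.unit⁻¹ : Module.End K (E μ₀)) = 1 := by
        nth_rewrite 1 [← hqu.unit_spec]
        exact hqu.unit.mul_inv
      rw [this, Module.End.one_apply]
    have hy' : y ∈ LinearMap.range (orbitMap (F μ₀) (u μ₀)) := (hu μ₀) ▸ Submodule.mem_top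
    obtain ⟨p, hp⟩ := hy'
    simp only [orbitMap_apply] at hp
    refine ⟨p, ?_⟩
    simp only [orbitMap_apply]
    rw [hw', ← Module.End.mul_apply, ← map_mul, mul_comm p q, map_mul, Module.End.mul_apply, hp, hxy]
  -- conclude
  intro x hx
  have hx' : (⟨x, hx⟩ : E μ₀) ∈ LinearMap.range (orbitMap (F μ₀) w') := hcycw ▸ Submodule.mem_top
  obtain ⟨p, hp⟩ := hx'
  simp only [orbitMap_apply] at hp
  refine ⟨p * q, ?_⟩
  simp only [orbitMap_apply]
  have : ((Polynomial.aeval (F μ₀) p w' : E μ₀) : V) = x := by rw [hp]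
  rw [← this, coe_aeval_restrict f (E μ₀) (hmt μ₀) p w', hw'coe, map_mul, Module.End.mul_apply]
end B
open Polynomial Module LinearMap Matrix

section Mat
variable {n : ℕ} {K : Type*} [Field K]

lemma matrix_commute_aeval (M : Matrix (Fin n) (Fin n) K) (s : K[X]) :
    Mᵀ * Polynomial.aeval Mᵀ s = Polynomial.aeval Mᵀ s * Mᵀ := by
  have h1 : Polynomial.aeval Mᵀ (X * s) = Polynomial.aeval Mᵀ (s * X) := by rw [mul_comm]
  rw [_root_.map_mul, _root_.map_mul, Polynomial.aeval_X] at h1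
  exact h1

lemma aeval_matrix_transpose (M : Matrix (Fin n) (Fin n) K) (p : K[X]) :
    (Polynomial.aeval M p)ᵀ = Polynomial.aeval Mᵀ p := by
  induction p using Polynomial.induction_on with
  | C a =>
    rw [Polynomial.aeval_C, Polynomial.aeval_C, Algebra.algebraMap_eq_smul_one,
      Matrix.transpose_smul, Matrix.transpose_one]
  | add p q hp hq => rw [map_add, map_add, Matrix.transpose_add, hp, hq]
  | monomial m a ih =>
    have key : (C a * X ^ (m + 1)) = (C a * X ^ m) * X := by ring
    have l1 : Polynomial.aeval M (C a * X ^ m * X) = Polynomial.aeval M (C a * X ^ m) * M := by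
      rw [_root_.map_mul, Polynomial.aeval_X]
    have l2 : Polynomial.aeval Mᵀ (C a * X ^ m * X) = Polynomial.aeval Mᵀ (C a * X ^ m) * Mᵀ := by
      rw [_root_.map_mul, Polynomial.aeval_X]
    rw [key, l1, l2, Matrix.transpose_mul, ih, matrix_commute_aeval]

lemma aeval_conj_of_intertwine {A B G : Matrix (Fin n) (Fin n) K}
    (h : A * G = G * B) (p : K[X]) :
    Polynomial.aeval A p * G = G * Polynomial.aeval B p := by
  have hpow : ∀ m : ℕ, A ^ m * G = G * B ^ m := by
    intro m
    induction m with
    | zero => simp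
    | succ m ih =>
      rw [pow_succ, pow_succ, mul_assoc, h, ← mul_assoc, ih, mul_assoc]
  rw [Polynomial.aeval_eq_sum_range (R := K) (p := p) A,
    Polynomial.aeval_eq_sum_range (R := K) (p := p) B, Finset.sum_mul, Finset.mul_sum]
  apply Finset.sum_congr rfl
  intro i _
  rw [Matrix.smul_mul, Matrix.mul_smul, hpow i]
end Mat
open Matrix

noncomputable def matEnd (n : ℕ) : Matrix (Fin n) (Fin n) ℂ ≃ₐ[ℂ] Module.End ℂ (Fin n → ℂ) :=
  Matrix.toLinAlgEquiv'

/-- uniqueness lemma, algebraic core: a G-skew-adjoint matrix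
commuting with a regular G-selfadjoint matrix is zero. -/
theorem uniqueness_lemma_algebraic_core
    (n : ℕ) (G L B : Matrix (Fin n) (Fin n) ℝ)
    (hGsymm : G.IsSymm) (hGinv : IsUnit G.det)
    (hsa : Lᵀ * G = G * L)
    (hreg : ∀ μ : ℂ, μ ∈ spectrum ℂ (L.map (algebraMap ℝ ℂ)) →
      Module.finrank ℂ
        (LinearMap.ker (Matrix.mulVecLin (L.map (algebraMap ℝ ℂ) - μ • 1))) = 1)
    (hcomm : B * L = L * B)
    (hskew : Bᵀ * G + G * B = 0) :
    B = 0 := by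
  classical
  set Mc := L.map (algebraMap ℝ ℂ) with hMc
  set Bc := B.map (algebraMap ℝ ℂ) with hBc
  set Gc := G.map (algebraMap ℝ ℂ) with hGc
  -- complexified hypotheses
  have hcommC : Bc * Mc = Mc * Bc := by
    rw [hBc, hMc, ← Matrix.map_mul, ← Matrix.map_mul, hcomm]
  have hsaC : Mcᵀ * Gc = Gc * Mc := by
    rw [hMc, hGc, ← Matrix.transpose_map, ← Matrix.map_mul, ← Matrix.map_mul, hsa]
  have hskewC : Bcᵀ * Gc + Gc * Bc = 0 := by
    rw [hBc, hGc, ← Matrix.transpose_map, ← Matrix.map_mul, ← Matrix.map_mul, ← Matrix.map_add,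
      hskew]
    · ext i j
      simp
    · exact fun a b => map_add (algebraMap ℝ ℂ) a b
  have hGcdet : IsUnit Gc.det := by
    have h6 : Gc = (algebraMap ℝ ℂ).mapMatrix G := by rw [hGc, RingHom.mapMatrix_apply]
    rw [h6, ← RingHom.map_det]
    exact hGinv.map _
  -- pass to endomorphisms
  set f := (matEnd n) Mc with hf
  set g := (matEnd n) Bc with hg
  have heig : ∀ μ : ℂ, Module.finrank ℂ (f.eigenspace μ) ≤ 1 := by
    intro μ
    by_cases hev : f.HasEigenvalue μ
    · have hspec : μ ∈ spectrum ℂ Mc := by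
        rw [← AlgEquiv.spectrum_eq (matEnd n) Mc]
        exact Module.End.hasEigenvalue_iff_mem_spectrum.mp hev
      have hkey : f.eigenspace μ = LinearMap.ker (Matrix.mulVecLin (Mc - μ • 1)) := by
        rw [Module.End.eigenspace_def]
        congr 1
        have h5 : Matrix.mulVecLin (Mc - μ • 1) = (matEnd n) (Mc - μ • 1) := rfl
        rw [h5, map_sub, hf]
        congr 1
        rw [← Algebra.algebraMap_eq_smul_one, ← Algebra.algebraMap_eq_smul_one,
          AlgEquiv.commutes]
      rw [hkey, hreg μ hspec]
    · have hbot : f.eigenspace μ = ⊥ := by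
        by_contra hc
        exact hev (Module.End.hasEigenvalue_iff.mpr hc)
      rw [hbot]
      simp
  obtain ⟨v, hv⟩ := exists_cyclic_of_eigenspaces f heig
  have hfg : Commute f g := by
    show f * g = g * f
    rw [hf, hg, ← _root_.map_mul, ← _root_.map_mul, hcommC]
  obtain ⟨p, hp⟩ := commutant_eq_aeval f g v hv hfg
  have hBcp : Bc = Polynomial.aeval Mc p := by
    apply (matEnd n).injective
    rw [← hg, hp, hf]
    exact Polynomial.aeval_algHom_apply (matEnd n) Mc p
  -- the algebraic finish
  have h1 : Bcᵀ * Gc = Gc * Bc := by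
    rw [hBcp, aeval_matrix_transpose]
    exact aeval_conj_of_intertwine hsaC p
  have h2 : Gc * Bc + Gc * Bc = 0 := by rw [← h1, ← hskewC, h1]
  have h3 : Gc * Bc = 0 := by
    have h4 : (2 : ℂ) • (Gc * Bc) = 0 := by
      rw [two_smul]
      exact h2
    rcases smul_eq_zero.mp h4 with h | h
    · exact absurd h two_ne_zero
    · exact h
  have hBc0 : Bc = 0 := by
    calc Bc = 1 * Bc := (one_mul _).symm
      _ = (Gc⁻¹ * Gc) * Bc := by rw [Matrix.nonsing_inv_mul Gc hGcdet]
      _ = Gc⁻¹ * (Gc * Bc) := by rw [mul_assoc]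
      _ = 0 := by rw [h3, mul_zero]
  -- descend to ℝ
  have hinj : Function.Injective (algebraMap ℝ ℂ) := fun a b hab => by
    exact_mod_cast hab
  apply Matrix.map_injective hinj
  show Bc = (0 : Matrix (Fin n) (Fin n) ℝ).map (algebraMap ℝ ℂ)
  rw [hBc0]
  ext i j
  simp
end Cyclic
end

section
/- Trace lemma. Let V be a real vector space of finite dimension n, let g be a nondegenerate symmetric bilinear form on V, and let N : V → V be a g-selfadjoint endomorphism (g(Nv, w) = g(v, Nw) for all v, w) with tr N = 0. Let u ∈ V and α ∈ V*. If there exists an endomorphism B : V → V such that B∘N − N∘B = (n/2)·( u⊗α + (u⊗α)^* ) − α(u)·id_V, where u⊗α denotes the endomorphism v ↦ α(v)·u and A^* denotes the g-adjoint of A (defined by g(A^* v, w) = g(v, A w)), then α(N u) = 0. -/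
lemma trace_smulRight_aux (V : Type*) [AddCommGroup V] [Module ℝ V]
    [FiniteDimensional ℝ V] (φ : V →ₗ[ℝ] ℝ) (u : V) :
    LinearMap.trace ℝ V (φ.smulRight u) = φ u := by
  have h : φ.smulRight u = dualTensorHom ℝ V V (φ ⊗ₜ u) := by
    ext v; simp [dualTensorHom_apply]
  rw [h, LinearMap.trace_eq_contract_apply, contractLeft_apply]

/-- trace lemma.  If `N` is `g`-selfadjoint and traceless and
`B∘N − N∘B = (n/2)(u⊗α + (u⊗α)^*) − α(u)·id` for some endomorphism `B`
(the equation is expressed by pairing both sides with `g`), then `α(Nu) = 0`. -/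
theorem trace_lemma
    (V : Type*) [AddCommGroup V] [Module ℝ V] [FiniteDimensional ℝ V]
    (g : V →ₗ[ℝ] V →ₗ[ℝ] ℝ)
    (hsymm : ∀ v w : V, g v w = g w v)
    (hnd : ∀ v : V, (∀ w : V, g v w = 0) → v = 0)
    (N : V →ₗ[ℝ] V)
    (hsa : ∀ v w : V, g (N v) w = g v (N w))
    (htr : LinearMap.trace ℝ V N = 0)
    (u : V) (α : V →ₗ[ℝ] ℝ) (B : V →ₗ[ℝ] V)
    (hB : ∀ v w : V, g ((B ∘ₗ N - N ∘ₗ B) v) w =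
      ((Module.finrank ℝ V : ℝ) / 2) * (α v * g u w + α w * g v u) - α u * g v w) :
    α (N u) = 0 := by
  by_cases hn : Module.finrank ℝ V = 0
  · have : Subsingleton V := (Module.finrank_zero_iff (R := ℝ)).mp hn
    have : N u = 0 := Subsingleton.elim _ _
    rw [this, map_zero]
  -- g is injective hence surjective onto the dual
  have hginj : Function.Injective g := by
    rw [← LinearMap.ker_eq_bot, LinearMap.ker_eq_bot']
    intro v hv
    exact hnd v fun w => by rw [hv]; rfl
  have hgsurj : Function.Surjective g :=
    (LinearMap.injective_iff_surjective_of_finrank_eq_finrank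
      (Subspace.dual_finrank_eq (K := ℝ) (V := V)).symm).mp hginj
  obtain ⟨z, hz⟩ := hgsurj α
  set n : ℝ := (Module.finrank ℝ V : ℝ) with hdefn
  -- the explicit operator equal to the commutator
  set D : V →ₗ[ℝ] V :=
    (n / 2) • (α.smulRight u + (g.flip u).smulRight z) - α u • LinearMap.id with hD
  have hCD : B ∘ₗ N - N ∘ₗ B = D := by
    apply LinearMap.ext
    intro v
    rw [← sub_eq_zero]
    apply hnd
    intro w
    have h1 : g (D v) w =
        (n / 2) * (α v * g u w + α w * g v u) - α u * g v w := by
      simp only [hD, LinearMap.sub_apply, LinearMap.smul_apply, LinearMap.add_apply,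
        LinearMap.smulRight_apply, LinearMap.flip_apply, LinearMap.id_apply,
        map_smul, map_sub, map_add, LinearMap.sub_apply, LinearMap.smul_apply,
        smul_eq_mul]
      have hzw : g z w = α w := by rw [hz]
      rw [hzw]
      ring
    rw [map_sub, LinearMap.sub_apply, hB, h1, sub_self]
  -- trace of (commutator) ∘ N is zero
  have htr0 : LinearMap.trace ℝ V ((B ∘ₗ N - N ∘ₗ B) ∘ₗ N) = 0 := by
    have : (B ∘ₗ N - N ∘ₗ B) ∘ₗ N = (B ∘ₗ N) * N - N * (B ∘ₗ N) := by
      ext v; simp [Module.End.mul_apply]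
    rw [this, map_sub, LinearMap.trace_mul_comm, sub_self]
  -- trace of D ∘ N
  have hcomp : ∀ (φ : V →ₗ[ℝ] ℝ) (x : V), (φ.smulRight x) ∘ₗ N = (φ ∘ₗ N).smulRight x := by
    intro φ x; ext v; simp
  have hDN : D ∘ₗ N = (n / 2) • (((α ∘ₗ N).smulRight u) + (((g.flip u) ∘ₗ N).smulRight z))
      - α u • N := by
    rw [hD]
    ext v
    simp [hcomp]
  have htrDN : LinearMap.trace ℝ V (D ∘ₗ N) = n * α (N u) := by
    rw [hDN, map_sub, map_smul, map_smul, map_add, trace_smulRight_aux, trace_smulRight_aux]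
    have h2 : (g.flip u ∘ₗ N) z = α (N u) := by
      simp only [LinearMap.comp_apply, LinearMap.flip_apply]
      rw [hsa, ← hz]
    simp only [LinearMap.comp_apply, h2, smul_eq_mul, htr]
    ring
  rw [hCD] at htr0
  rw [htr0] at htrDN
  have hne : n ≠ 0 := by
    simp only [hdefn, ne_eq, Nat.cast_eq_zero]
    exact hn
  exact (mul_eq_zero.mp htrDN.symm).resolve_left hne
end

section
/- Derivatives of the eigenvalue along a canonical frame for a real Jordan block. Let U ⊆ ℝ^n be open, let e_1, …, e_n : U → ℝ^n be smooth vector fields that are linearly independent at every point, let ε ∈ {+1, −1}, and let λ : U → ℝ be smooth with λ(x) ≠ 0 for all x. Define g : U → Mat_n(ℝ) as the unique map with g(x) symmetric and e_i(x)ᵀ g(x) e_j(x) = ε if i + j = n + 1 and = 0 otherwise, and define L : U → Mat_n(ℝ) as the unique map with L(x) e_j(x) = λ(x) e_j(x) + e_{j−1}(x) for all j (with the convention e_0 := 0). If L is compatible with g on U, then the directional derivatives e_i(λ) := Dλ·e_i vanish identically on U for i = 1, …, n−1. -/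
open Matrix Polynomial

noncomputable def pd {ι : Type*} [Fintype ι] [DecidableEq ι] (i : ι)
    (f : (ι → ℝ) → ℝ) (x : ι → ℝ) : ℝ :=
  fderiv ℝ f x (Pi.single i 1)

noncomputable def christoffel {ι : Type*} [Fintype ι] [DecidableEq ι]
    (g : (ι → ℝ) → Matrix ι ι ℝ) (x : ι → ℝ) (l j k : ι) : ℝ :=
  (1/2) * ∑ m, (g x)⁻¹ l m *
    (pd j (fun y => g y m k) x + pd k (fun y => g y m j) x - pd m (fun y => g y j k) x)

def IsCompatiblePair {ι : Type*} [Fintype ι] [DecidableEq ι]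
    (U : Set (ι → ℝ)) (g L : (ι → ℝ) → Matrix ι ι ℝ) : Prop :=
  (∀ i j : ι, ContDiffOn ℝ (⊤ : ℕ∞) (fun y => g y i j) U) ∧
  (∀ i j : ι, ContDiffOn ℝ (⊤ : ℕ∞) (fun y => L y i j) U) ∧
  (∀ x ∈ U, (g x).IsSymm ∧ IsUnit (g x).det ∧ IsUnit (L x).det ∧ (g x * L x).IsSymm) ∧
  (∀ x ∈ U, ∀ i j k : ι,
    pd k (fun y => (g y * L y) i j) x
      - (∑ l, christoffel g x l k i * (g x * L x) l j)
      - (∑ l, christoffel g x l k j * (g x * L x) i l)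
    = pd i (fun y => (1/2) * (L y).trace) x * g x j k
      + pd j (fun y => (1/2) * (L y).trace) x * g x i k)

private lemma hasFDerivAt_tripleSum {n : ℕ} (x : Fin n → ℝ)
    (u w : (Fin n → ℝ) → Fin n → ℝ) (M : (Fin n → ℝ) → Matrix (Fin n) (Fin n) ℝ)
    (u' w' : Fin n → ((Fin n → ℝ) →L[ℝ] ℝ)) (M' : Fin n → Fin n → ((Fin n → ℝ) →L[ℝ] ℝ))
    (hu : ∀ i, HasFDerivAt (fun y => u y i) (u' i) x)
    (hM : ∀ i j, HasFDerivAt (fun y => M y i j) (M' i j) x)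
    (hw : ∀ j, HasFDerivAt (fun y => w y j) (w' j) x) :
    HasFDerivAt (fun y => ∑ i, ∑ j, u y i * M y i j * w y j)
      (∑ i, ∑ j, ((u x i * M x i j) • w' j +
        w x j • (u x i • M' i j + M x i j • u' i))) x := by
  apply HasFDerivAt.fun_sum
  intro i _
  apply HasFDerivAt.fun_sum
  intro j _
  exact ((hu i).mul (hM i j)).mul (hw j)

private lemma fderiv_tripleSum_apply {n : ℕ} (x v : Fin n → ℝ)
    (u w : (Fin n → ℝ) → Fin n → ℝ) (M : (Fin n → ℝ) → Matrix (Fin n) (Fin n) ℝ)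
    (hu : ∀ l, DifferentiableAt ℝ (fun y => u y l) x)
    (hM : ∀ i j, DifferentiableAt ℝ (fun y => M y i j) x)
    (hw : ∀ l, DifferentiableAt ℝ (fun y => w y l) x) :
    fderiv ℝ (fun y => ∑ i, ∑ j, u y i * M y i j * w y j) x v
      = ∑ i, ∑ j, ((u x i * M x i j) * fderiv ℝ (fun y => w y j) x v
          + w x j * (u x i * fderiv ℝ (fun y => M y i j) x v
            + M x i j * fderiv ℝ (fun y => u y i) x v)) := by
  have h := hasFDerivAt_tripleSum x u w M
    (fun l => fderiv ℝ (fun y => u y l) x) (fun l => fderiv ℝ (fun y => w y l) x)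
    (fun i j => fderiv ℝ (fun y => M y i j) x)
    (fun l => (hu l).hasFDerivAt) (fun i j => (hM i j).hasFDerivAt)
    (fun l => (hw l).hasFDerivAt)
  rw [h.fderiv]
  simp only [ContinuousLinearMap.coe_sum', Finset.sum_apply, ContinuousLinearMap.add_apply,
    ContinuousLinearMap.coe_smul', Pi.smul_apply, smul_eq_mul]
  try refine Finset.sum_congr rfl fun i _ => Finset.sum_congr rfl fun j _ => by ring

private lemma dirsum {n : ℕ} (x : Fin n → ℝ) (φ : (Fin n → ℝ) → ℝ) (z : Fin n → ℝ) :
    ∑ k, z k * pd k φ x = fderiv ℝ φ x z := by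
  have hz : z = ∑ k, z k • (Pi.single k (1:ℝ) : Fin n → ℝ) := by
    funext j
    simp [Finset.sum_apply, Pi.single_apply]
  conv_rhs => rw [hz]
  rw [map_sum]
  simp [pd, smul_eq_mul]

private lemma sum3_rev {α β γ : Type*} [Fintype α] [Fintype β] [Fintype γ]
    {M : Type*} [AddCommMonoid M] (f : α → β → γ → M) :
    ∑ a, ∑ b, ∑ c, f a b c = ∑ c, ∑ b, ∑ a, f a b c := by
  calc ∑ a, ∑ b, ∑ c, f a b c
      = ∑ a, ∑ c, ∑ b, f a b c := Finset.sum_congr rfl fun a _ => Finset.sum_comm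
    _ = ∑ c, ∑ a, ∑ b, f a b c := Finset.sum_comm
    _ = ∑ c, ∑ b, ∑ a, f a b c := Finset.sum_congr rfl fun c _ => Finset.sum_comm

/-- swap the outermost and innermost sums of a quadruple sum, keeping middle order -/
private lemma sum4_perm {α : Type*} [Fintype α] {M : Type*} [AddCommMonoid M]
    (f : α → α → α → α → M) :
    ∑ p, ∑ q, ∑ k, ∑ l, f p q k l = ∑ l, ∑ q, ∑ k, ∑ p, f p q k l := by
  calc ∑ p, ∑ q, ∑ k, ∑ l, f p q k l
      = ∑ q, ∑ p, ∑ k, ∑ l, f p q k l := Finset.sum_comm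
    _ = ∑ q, ∑ k, ∑ p, ∑ l, f p q k l := Finset.sum_congr rfl fun q _ => Finset.sum_comm
    _ = ∑ q, ∑ k, ∑ l, ∑ p, f p q k l := Finset.sum_congr rfl fun q _ =>
        Finset.sum_congr rfl fun k _ => Finset.sum_comm
    _ = ∑ q, ∑ l, ∑ k, ∑ p, f p q k l := Finset.sum_congr rfl fun q _ => Finset.sum_comm
    _ = ∑ l, ∑ q, ∑ k, ∑ p, f p q k l := Finset.sum_comm

/-- swap the 2nd and 4th sums of a quadruple sum -/
private lemma sum4_perm' {α : Type*} [Fintype α] {M : Type*} [AddCommMonoid M]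
    (f : α → α → α → α → M) :
    ∑ p, ∑ q, ∑ k, ∑ l, f p q k l = ∑ p, ∑ l, ∑ k, ∑ q, f p q k l :=
  Finset.sum_congr rfl fun p _ => sum3_rev fun q k l => f p q k l

private lemma sum2_sub_sub {n : ℕ} (A B C : Fin n → Fin n → ℝ) :
    (∑ p, ∑ q, A p q) - (∑ p, ∑ q, B p q) - (∑ p, ∑ q, C p q)
      = ∑ p, ∑ q, (A p q - B p q - C p q) := by
  simp only [Finset.sum_sub_distrib]

private lemma sum_single_cond {n : ℕ} (m : ℕ) (hm : m < n) (f : Fin n → ℝ) :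
    (∑ b : Fin n, if (b : ℕ) = m then f b else 0) = f ⟨m, hm⟩ := by
  rw [show (fun b : Fin n => if (b:ℕ) = m then f b else 0)
      = fun b => if b = ⟨m, hm⟩ then f b else 0 from
    funext fun b => if_congr (by simp [Fin.ext_iff]) rfl rfl]
  rw [Finset.sum_ite_eq' Finset.univ ⟨m, hm⟩ f]
  simp

set_option maxHeartbeats 4000000 in
/-- derivatives of the eigenvalue along a canonical frame for a
real Jordan block vanish in the directions e_1, …, e_{n-1}. -/
theorem eigenvalue_derivatives_along_canonical_frame
    (n : ℕ) (hn : 1 ≤ n) (U : Set (Fin n → ℝ)) (hU : IsOpen U)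
    (e : Fin n → (Fin n → ℝ) → (Fin n → ℝ))
    (he : ∀ i : Fin n, ∀ c : Fin n, ContDiffOn ℝ (⊤ : ℕ∞) (fun y => e i y c) U)
    (hli : ∀ x ∈ U, LinearIndependent ℝ (fun i : Fin n => e i x))
    (ε : ℝ) (hε : ε = 1 ∨ ε = -1)
    (lam : (Fin n → ℝ) → ℝ) (hlam : ContDiffOn ℝ (⊤ : ℕ∞) lam U)
    (hlam0 : ∀ x ∈ U, lam x ≠ 0)
    (g L : (Fin n → ℝ) → Matrix (Fin n) (Fin n) ℝ)
    (hg : ∀ x ∈ U, (g x).IsSymm ∧ ∀ i j : Fin n,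
      e i x ⬝ᵥ (g x).mulVec (e j x) = if (i : ℕ) + (j : ℕ) + 1 = n then ε else 0)
    (hL : ∀ x ∈ U, ∀ j : Fin n, (L x).mulVec (e j x) =
      lam x • e j x +
        (if h : (j : ℕ) = 0 then 0 else e ⟨(j : ℕ) - 1, by omega⟩ x))
    (hcomp : IsCompatiblePair U g L) :
    ∀ x ∈ U, ∀ i : Fin n, (i : ℕ) + 2 ≤ n → fderiv ℝ lam x (e i x) = 0 := by
  obtain ⟨hgC, hLC, hpt, hceq⟩ := hcomp
  -- the trace of L equals n * lam on U
  have htr : ∀ y ∈ U, (L y).trace = (n : ℝ) * lam y := by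
    intro y hy
    classical
    set P : Matrix (Fin n) (Fin n) ℝ := Matrix.of (fun r s => e s y r) with hPdef
    have hPunit : IsUnit P := by
      rw [← Matrix.linearIndependent_cols_iff_isUnit]
      have hPt : (fun i : Fin n => Pᵀ i) = fun i => e i y := by
        funext a b; simp [hPdef, Matrix.transpose_apply]
      exact hli y hy
    have hPdet : IsUnit P.det := (Matrix.isUnit_iff_isUnit_det P).mp hPunit
    set J : Matrix (Fin n) (Fin n) ℝ :=
      Matrix.of (fun r s => (if r = s then lam y else 0)
        + (if (r:ℕ)+1 = (s:ℕ) then 1 else 0)) with hJdef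
    have hLP : L y * P = P * J := by
      ext r s
      have h1 : (L y * P) r s = ((L y) *ᵥ (e s y)) r := by
        simp [Matrix.mul_apply, Matrix.mulVec, dotProduct, hPdef]
      rw [h1, hL y hy s]
      have h2 : (P * J) r s
          = ∑ t, e t y r * ((if t = s then lam y else 0)
            + (if (t:ℕ)+1 = (s:ℕ) then 1 else 0)) := by
        simp [Matrix.mul_apply, hPdef, hJdef]
      rw [h2]
      simp only [mul_add]
      rw [Finset.sum_add_distrib]
      have hA : ∑ t, e t y r * (if t = s then lam y else 0) = lam y * e s y r := by
        simp only [mul_ite, mul_zero]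
        rw [Finset.sum_ite_eq' Finset.univ s (fun t => e t y r * lam y)]
        simp [mul_comm]
      have hB : ∑ t, e t y r * (if (t:ℕ)+1 = (s:ℕ) then 1 else 0)
          = (if hs : (s:ℕ) = 0 then (0 : Fin n → ℝ) else e ⟨(s:ℕ)-1, by omega⟩ y) r := by
        by_cases hs : (s:ℕ) = 0
        · have : ∀ t : Fin n, ¬((t:ℕ)+1 = (s:ℕ)) := fun t => by omega
          simp [hs, this]
        · have hlt : (s:ℕ)-1 < n := by omega
          have hiff : ∀ t : Fin n, ((t:ℕ)+1 = (s:ℕ)) = ((t:ℕ) = (s:ℕ)-1) :=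
            fun t => propext (by omega)
          simp only [hiff, mul_ite, mul_one, mul_zero]
          rw [sum_single_cond ((s:ℕ)-1) hlt (fun t => e t y r)]
          simp [hs]
      rw [hA, hB]
      simp [smul_eq_mul]
    have hLy : L y = P * J * P⁻¹ := by
      rw [← hLP, Matrix.mul_assoc, Matrix.mul_nonsing_inv _ hPdet, Matrix.mul_one]
    rw [hLy, Matrix.trace_mul_cycle, Matrix.nonsing_inv_mul _ hPdet, Matrix.one_mul]
    have : ∀ r : Fin n, ¬((r:ℕ)+1 = (r:ℕ)) := fun r => by omega
    simp [Matrix.trace, Matrix.diag, hJdef, this, Finset.sum_add_distrib, mul_comm]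
  intro x hx i hi
  have hn2 : 2 ≤ n := by omega
  have hUx : U ∈ nhds x := hU.mem_nhds hx
  -- differentiability of all ingredients at x
  have hde : ∀ (a l : Fin n), DifferentiableAt ℝ (fun y => e a y l) x :=
    fun a l => ((he a l).contDiffAt hUx).differentiableAt (by simp)
  have hdg : ∀ (p q : Fin n), DifferentiableAt ℝ (fun y => g y p q) x :=
    fun p q => ((hgC p q).contDiffAt hUx).differentiableAt (by simp)
  have hdL : ∀ (p q : Fin n), DifferentiableAt ℝ (fun y => L y p q) x :=
    fun p q => ((hLC p q).contDiffAt hUx).differentiableAt (by simp)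
  have hdlam : DifferentiableAt ℝ lam x := (hlam.contDiffAt hUx).differentiableAt (by simp)
  have hdgl : ∀ (p q : Fin n), DifferentiableAt ℝ (fun y => (g y * L y) p q) x := by
    intro p q
    have hfn : (fun y => (g y * L y) p q) = fun y => ∑ s, g y p s * L y s q := by
      funext y; simp [Matrix.mul_apply]
    rw [hfn]
    exact DifferentiableAt.fun_sum fun s _ => (hdg p s).mul (hdL s q)
  -- pointwise symmetry facts
  have hgs : ∀ (p q : Fin n), g x p q = g x q p := fun p q => ((hpt x hx).1.apply q p)
  have hgls : ∀ (p q : Fin n), (g x * L x) p q = (g x * L x) q p :=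
    fun p q => ((hpt x hx).2.2.2.apply q p)
  set c : Fin n := ⟨n - 1, by omega⟩ with hcdef
  set v : Fin n → ℝ := e c x with hvdef
  -- pairings
  set pb : (Fin n → ℝ) → (Fin n → ℝ) → ℝ :=
    fun z w => ∑ p, ∑ q, z p * g x p q * w q with hpbdef
  set pM : (Fin n → ℝ) → (Fin n → ℝ) → ℝ :=
    fun z w => ∑ p, ∑ q, z p * (g x * L x) p q * w q with hpMdef
  set Gam : (Fin n → ℝ) → (Fin n → ℝ) → Fin n → ℝ :=
    fun z u l => ∑ k, ∑ q, christoffel g x l k q * z k * u q with hGamdef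
  set W : Fin n → Fin n → ℝ :=
    fun a l => fderiv ℝ (fun y => e a y l) x v + Gam v (e a x) l with hWdef
  set fp : Fin n → Fin n := fun b => ⟨(b:ℕ)-1, by omega⟩ with hfpdef
  have pb_eq : ∀ z w, pb z w = z ⬝ᵥ (g x) *ᵥ w := by
    intro z w
    simp [hpbdef, dotProduct, Matrix.mulVec, Finset.mul_sum, mul_assoc]
  have pM_eq : ∀ z w, pM z w = z ⬝ᵥ ((g x) * (L x)) *ᵥ w := by
    intro z w
    simp [hpMdef, dotProduct, Matrix.mulVec, Finset.mul_sum, mul_assoc]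
  have pb_symm : ∀ z w, pb z w = pb w z := by
    intro z w
    rw [hpbdef]
    dsimp only
    rw [Finset.sum_comm]
    exact Finset.sum_congr rfl fun q _ => Finset.sum_congr rfl fun p _ => by
      rw [hgs p q]; ring
  have pM_symm : ∀ z w, pM z w = pM w z := by
    intro z w
    rw [hpMdef]
    dsimp only
    rw [Finset.sum_comm]
    exact Finset.sum_congr rfl fun q _ => Finset.sum_congr rfl fun p _ => by
      rw [hgls p q]; ring
  have pbe : ∀ a b : Fin n, pb (e a x) (e b x) = if (a:ℕ)+(b:ℕ)+1 = n then ε else 0 := by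
    intro a b
    rw [pb_eq]
    exact (hg x hx).2 a b
  -- the shift identity: pM z (e b x) = lam x * pb z (e b x) + pb z (e (b-1) x)
  have pMshift : ∀ (z : Fin n → ℝ) (b : Fin n), pM z (e b x)
      = lam x * pb z (e b x)
        + (if (b:ℕ) = 0 then 0 else pb z (e (fp b) x)) := by
    intro z b
    rw [pM_eq, ← Matrix.mulVec_mulVec, hL x hx b]
    by_cases hb : (b:ℕ) = 0
    · simp [hb, Matrix.mulVec_add, Matrix.mulVec_smul, dotProduct_add, dotProduct_smul,
        smul_eq_mul, pb_eq]
    · rw [dif_neg hb, if_neg hb, Matrix.mulVec_add, Matrix.mulVec_smul, dotProduct_add,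
        dotProduct_smul, smul_eq_mul, pb_eq, pb_eq]
  -- metricity of the Christoffel symbols
  have metric : ∀ (p q r : Fin n), pd p (fun y => g y q r) x
      = ∑ l, (christoffel g x l p q * g x l r + christoffel g x l p r * g x q l) := by
    have hdet : IsUnit (g x).det := (hpt x hx).2.1
    have hgsm : (g x)ᵀ = g x := (hpt x hx).1
    have hinv1 : (g x)⁻¹ * g x = 1 := Matrix.nonsing_inv_mul _ hdet
    have hinvs : ∀ p q : Fin n, (g x)⁻¹ p q = (g x)⁻¹ q p := by
      intro p q
      have h1 : ((g x)⁻¹)ᵀ = (g x)⁻¹ := by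
        rw [Matrix.transpose_nonsing_inv, hgsm]
      conv_lhs => rw [← h1]
      rw [Matrix.transpose_apply]
    have contr : ∀ (r : Fin n) (T : Fin n → ℝ),
        ∑ l, (∑ m, (g x)⁻¹ l m * T m) * g x l r = T r := by
      intro r T
      have h1 : ∀ m : Fin n, (∑ l, (g x)⁻¹ l m * g x l r)
          = (1 : Matrix (Fin n) (Fin n) ℝ) m r := by
        intro m
        rw [← hinv1, Matrix.mul_apply]
        exact Finset.sum_congr rfl fun l _ => by rw [hinvs l m]
      calc ∑ l, (∑ m, (g x)⁻¹ l m * T m) * g x l r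
          = ∑ l, ∑ m, (g x)⁻¹ l m * g x l r * T m := by
            refine Finset.sum_congr rfl fun l _ => ?_
            rw [Finset.sum_mul]
            exact Finset.sum_congr rfl fun m _ => by ring
        _ = ∑ m, ∑ l, (g x)⁻¹ l m * g x l r * T m := Finset.sum_comm
        _ = ∑ m, (1 : Matrix (Fin n) (Fin n) ℝ) m r * T m := by
            refine Finset.sum_congr rfl fun m _ => ?_
            rw [← Finset.sum_mul, h1 m]
        _ = T r := by simp [Matrix.one_apply]
    have pdsym : ∀ (p q r : Fin n), pd p (fun y => g y q r) x = pd p (fun y => g y r q) x := by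
      intro p q r
      unfold pd
      congr 1
      apply Filter.EventuallyEq.fderiv_eq
      exact Filter.eventuallyEq_of_mem hUx fun y hy => ((hpt y hy).1.apply r q)
    intro p q r
    have e1 : ∑ l, christoffel g x l p q * g x l r
        = (1/2) * (pd p (fun y => g y r q) x + pd q (fun y => g y r p) x
            - pd r (fun y => g y p q) x) := by
      have h2 : ∑ l, christoffel g x l p q * g x l r
          = ∑ l, (∑ m, (g x)⁻¹ l m * ((1/2) * (pd p (fun y => g y m q) x
              + pd q (fun y => g y m p) x - pd m (fun y => g y p q) x))) * g x l r := by
        refine Finset.sum_congr rfl fun l _ => ?_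
        simp only [christoffel]
        rw [Finset.mul_sum]
        refine congrArg (· * g x l r) ?_
        exact Finset.sum_congr rfl fun m _ => by ring
      rw [h2, contr r (fun m => (1/2) * (pd p (fun y => g y m q) x
          + pd q (fun y => g y m p) x - pd m (fun y => g y p q) x))]
    have e2 : ∑ l, christoffel g x l p r * g x q l
        = (1/2) * (pd p (fun y => g y q r) x + pd r (fun y => g y q p) x
            - pd q (fun y => g y p r) x) := by
      have h2 : ∑ l, christoffel g x l p r * g x q l
          = ∑ l, (∑ m, (g x)⁻¹ l m * ((1/2) * (pd p (fun y => g y m r) x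
              + pd r (fun y => g y m p) x - pd m (fun y => g y p r) x))) * g x l q := by
        refine Finset.sum_congr rfl fun l _ => ?_
        simp only [christoffel]
        rw [Finset.mul_sum, hgs q l]
        refine congrArg (· * g x l q) ?_
        exact Finset.sum_congr rfl fun m _ => by ring
      rw [h2, contr q (fun m => (1/2) * (pd p (fun y => g y m r) x
          + pd r (fun y => g y m p) x - pd m (fun y => g y p r) x))]
    rw [Finset.sum_add_distrib, e1, e2, pdsym p r q, pdsym q r p, pdsym r q p]
    ring
  -- derivative of (1/2) trace L
  have hdird : ∀ z : Fin n → ℝ,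
      fderiv ℝ (fun y => 1/2 * (L y).trace) x z = ((n:ℝ)/2) * fderiv ℝ lam x z := by
    intro z
    have hev : (fun y => 1/2 * (L y).trace) =ᶠ[nhds x] fun y => ((n:ℝ)/2) * lam y :=
      Filter.eventuallyEq_of_mem hUx fun y hy => by rw [htr y hy]; ring
    rw [hev.fderiv_eq, fderiv_const_mul hdlam]
    simp
  -- antisymmetry of the connection coefficients
  have AS0 : ∀ a t : Fin n, pb (W a) (e t x) + pb (W t) (e a x) = 0 := by
    intro a t
    have hconst : fderiv ℝ (fun y => ∑ p, ∑ q, e a y p * g y p q * e t y q) x = 0 := by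
      have hev : (fun y => ∑ p, ∑ q, e a y p * g y p q * e t y q)
          =ᶠ[nhds x] (fun _ => if (a:ℕ)+(t:ℕ)+1 = n then ε else 0) :=
        Filter.eventuallyEq_of_mem hUx fun y hy => by
          have h1 : ∑ p, ∑ q, e a y p * g y p q * e t y q = e a y ⬝ᵥ g y *ᵥ e t y := by
            simp [dotProduct, Matrix.mulVec, Finset.mul_sum, mul_assoc]
          rw [h1, (hg y hy).2 a t]
      rw [hev.fderiv_eq]
      exact fderiv_const_apply _
    have hexp := fderiv_tripleSum_apply x v (e a) (e t) g (hde a) hdg (hde t)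
    rw [hconst] at hexp
    have hzero : (∑ p, ∑ q, ((e a x p * g x p q) * fderiv ℝ (fun y => e t y q) x v
          + e t x q * (e a x p * fderiv ℝ (fun y => g y p q) x v
            + g x p q * fderiv ℝ (fun y => e a y p) x v))) = 0 := by
      rw [← hexp]
      simp
    have hmid : ∀ p q : Fin n, fderiv ℝ (fun y => g y p q) x v
        = ∑ k, ∑ l, (v k * (christoffel g x l k p * g x l q)
            + v k * (christoffel g x l k q * g x p l)) := by
      intro p q
      rw [← dirsum x (fun y => g y p q) v]
      refine Finset.sum_congr rfl fun k _ => ?_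
      rw [metric k p q, Finset.mul_sum]
      exact Finset.sum_congr rfl fun l _ => by ring
    have hsplit : (∑ p, ∑ q, ((e a x p * g x p q) * fderiv ℝ (fun y => e t y q) x v
          + e t x q * (e a x p * fderiv ℝ (fun y => g y p q) x v
            + g x p q * fderiv ℝ (fun y => e a y p) x v)))
        = ((∑ p, ∑ q, e a x p * g x p q * fderiv ℝ (fun y => e t y q) x v)
          + (∑ p, ∑ q, fderiv ℝ (fun y => e a y p) x v * g x p q * e t x q))
          + ((∑ p, ∑ q, ∑ k, ∑ l, e t x q * e a x p * v k
              * (christoffel g x l k p * g x l q))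
            + (∑ p, ∑ q, ∑ k, ∑ l, e t x q * e a x p * v k
              * (christoffel g x l k q * g x p l))) := by
      calc (∑ p, ∑ q, ((e a x p * g x p q) * fderiv ℝ (fun y => e t y q) x v
          + e t x q * (e a x p * fderiv ℝ (fun y => g y p q) x v
            + g x p q * fderiv ℝ (fun y => e a y p) x v)))
          = ∑ p, ∑ q, ((e a x p * g x p q * fderiv ℝ (fun y => e t y q) x v
              + fderiv ℝ (fun y => e a y p) x v * g x p q * e t x q)
            + (∑ k, ∑ l, (e t x q * e a x p * v k * (christoffel g x l k p * g x l q)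
              + e t x q * e a x p * v k * (christoffel g x l k q * g x p l)))) := by
            refine Finset.sum_congr rfl fun p _ => Finset.sum_congr rfl fun q _ => ?_
            rw [hmid p q]
            rw [show (∑ k, ∑ l, (e t x q * e a x p * v k * (christoffel g x l k p * g x l q)
              + e t x q * e a x p * v k * (christoffel g x l k q * g x p l)))
              = e t x q * (e a x p * (∑ k, ∑ l, (v k * (christoffel g x l k p * g x l q)
                + v k * (christoffel g x l k q * g x p l)))) from by
              simp only [Finset.mul_sum]
              exact Finset.sum_congr rfl fun k _ => Finset.sum_congr rfl fun l _ => by ring]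
            ring
        _ = _ := by
            simp only [Finset.sum_add_distrib]
            try ring
    have hS1 : (∑ p, ∑ q, ∑ k, ∑ l, e t x q * e a x p * v k
          * (christoffel g x l k p * g x l q))
        = ∑ p, ∑ q, Gam v (e a x) p * g x p q * e t x q := by
      calc (∑ p, ∑ q, ∑ k, ∑ l, e t x q * e a x p * v k
            * (christoffel g x l k p * g x l q))
          = ∑ l, ∑ q, ∑ k, ∑ p, e t x q * e a x p * v k
            * (christoffel g x l k p * g x l q) :=
            sum4_perm fun p q k l => e t x q * e a x p * v k
              * (christoffel g x l k p * g x l q)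
        _ = ∑ p, ∑ q, Gam v (e a x) p * g x p q * e t x q := by
            refine Finset.sum_congr rfl fun l _ => Finset.sum_congr rfl fun q _ => ?_
            simp only [hGamdef, Finset.sum_mul]
            exact Finset.sum_congr rfl fun k _ => Finset.sum_congr rfl fun p _ => by ring
    have hS2 : (∑ p, ∑ q, ∑ k, ∑ l, e t x q * e a x p * v k
          * (christoffel g x l k q * g x p l))
        = ∑ p, ∑ q, e a x p * g x p q * Gam v (e t x) q := by
      calc (∑ p, ∑ q, ∑ k, ∑ l, e t x q * e a x p * v k
            * (christoffel g x l k q * g x p l))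
          = ∑ p, ∑ l, ∑ k, ∑ q, e t x q * e a x p * v k
            * (christoffel g x l k q * g x p l) :=
            sum4_perm' fun p q k l => e t x q * e a x p * v k
              * (christoffel g x l k q * g x p l)
        _ = ∑ p, ∑ q, e a x p * g x p q * Gam v (e t x) q := by
            refine Finset.sum_congr rfl fun p _ => Finset.sum_congr rfl fun l _ => ?_
            simp only [hGamdef, Finset.mul_sum]
            exact Finset.sum_congr rfl fun k _ => Finset.sum_congr rfl fun q _ => by ring
    have hWa : pb (W a) (e t x)
        = (∑ p, ∑ q, fderiv ℝ (fun y => e a y p) x v * g x p q * e t x q)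
          + (∑ p, ∑ q, Gam v (e a x) p * g x p q * e t x q) := by
      simp only [hpbdef, hWdef]
      rw [← Finset.sum_add_distrib]
      refine Finset.sum_congr rfl fun p _ => ?_
      rw [← Finset.sum_add_distrib]
      exact Finset.sum_congr rfl fun q _ => by ring
    have hWt : pb (e a x) (W t)
        = (∑ p, ∑ q, e a x p * g x p q * fderiv ℝ (fun y => e t y q) x v)
          + (∑ p, ∑ q, e a x p * g x p q * Gam v (e t x) q) := by
      simp only [hpbdef, hWdef]
      rw [← Finset.sum_add_distrib]
      refine Finset.sum_congr rfl fun p _ => ?_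
      rw [← Finset.sum_add_distrib]
      exact Finset.sum_congr rfl fun q _ => by ring
    rw [pb_symm (W t) (e a x), hWa, hWt, ← hS1, ← hS2]
    rw [hsplit] at hzero
    linarith [hzero]
  have ASdiag : ∀ a : Fin n, pb (W a) (e a x) = 0 := fun a => by
    have := AS0 a a; linarith
  -- the master identity: contraction of the compatibility equation with the frame
  have master : ∀ a b : Fin n,
      (if (a:ℕ)+(b:ℕ)+1 = n then ε * fderiv ℝ lam x v else 0)
        - (if (b:ℕ) = 0 then 0 else pb (W a) (e (fp b) x))
        - (if (a:ℕ) = 0 then 0 else pb (W b) (e (fp a) x))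
      = ((n:ℝ)/2) * fderiv ℝ lam x (e a x) * (if (b:ℕ)+(c:ℕ)+1 = n then ε else 0)
        + ((n:ℝ)/2) * fderiv ℝ lam x (e b x) * (if (a:ℕ)+(c:ℕ)+1 = n then ε else 0) := by
    intro a b
    -- contraction of the compatibility equations with the frame
    have hcontr : (∑ p, ∑ q, ∑ k, (e a x p * e b x q * v k)
          * (pd k (fun y => (g y * L y) p q) x
            - (∑ l, christoffel g x l k p * (g x * L x) l q)
            - (∑ l, christoffel g x l k q * (g x * L x) p l)))
        = ∑ p, ∑ q, ∑ k, (e a x p * e b x q * v k)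
          * (pd p (fun y => 1/2 * (L y).trace) x * g x q k
            + pd q (fun y => 1/2 * (L y).trace) x * g x p k) := by
      refine Finset.sum_congr rfl fun p _ => Finset.sum_congr rfl fun q _ =>
        Finset.sum_congr rfl fun k _ => ?_
      rw [hceq x hx p q k]
    have hL1 : (∑ p, ∑ q, ∑ k, (e a x p * e b x q * v k)
          * (pd k (fun y => (g y * L y) p q) x
            - (∑ l, christoffel g x l k p * (g x * L x) l q)
            - (∑ l, christoffel g x l k q * (g x * L x) p l)))
        = (∑ p, ∑ q, ∑ k, (e a x p * e b x q * v k) * pd k (fun y => (g y * L y) p q) x)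
          - (∑ p, ∑ q, ∑ k, ∑ l, e b x q * e a x p * v k
              * (christoffel g x l k p * (g x * L x) l q))
          - (∑ p, ∑ q, ∑ k, ∑ l, e b x q * e a x p * v k
              * (christoffel g x l k q * (g x * L x) p l)) := by
      calc (∑ p, ∑ q, ∑ k, (e a x p * e b x q * v k)
          * (pd k (fun y => (g y * L y) p q) x
            - (∑ l, christoffel g x l k p * (g x * L x) l q)
            - (∑ l, christoffel g x l k q * (g x * L x) p l)))
          = ∑ p, ∑ q, ∑ k, ((e a x p * e b x q * v k) * pd k (fun y => (g y * L y) p q) x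
            - (∑ l, e b x q * e a x p * v k * (christoffel g x l k p * (g x * L x) l q))
            - (∑ l, e b x q * e a x p * v k * (christoffel g x l k q * (g x * L x) p l))) := by
            refine Finset.sum_congr rfl fun p _ => Finset.sum_congr rfl fun q _ =>
              Finset.sum_congr rfl fun k _ => ?_
            rw [show (∑ l, e b x q * e a x p * v k
                * (christoffel g x l k p * (g x * L x) l q))
              = (e a x p * e b x q * v k)
                * (∑ l, christoffel g x l k p * (g x * L x) l q) from by
              rw [Finset.mul_sum]
              exact Finset.sum_congr rfl fun l _ => by ring]
            rw [show (∑ l, e b x q * e a x p * v k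
                * (christoffel g x l k q * (g x * L x) p l))
              = (e a x p * e b x q * v k)
                * (∑ l, christoffel g x l k q * (g x * L x) p l) from by
              rw [Finset.mul_sum]
              exact Finset.sum_congr rfl fun l _ => by ring]
            ring
        _ = _ := by
            simp only [Finset.sum_sub_distrib]
    have hP1 : (∑ p, ∑ q, ∑ k, (e a x p * e b x q * v k)
          * pd k (fun y => (g y * L y) p q) x)
        = ∑ p, ∑ q, (e a x p * e b x q) * fderiv ℝ (fun y => (g y * L y) p q) x v := by
      refine Finset.sum_congr rfl fun p _ => Finset.sum_congr rfl fun q _ => ?_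
      rw [← dirsum x (fun y => (g y * L y) p q) v, Finset.mul_sum]
      exact Finset.sum_congr rfl fun k _ => by ring
    have hFMev : (fun y => ∑ p, ∑ q, e a y p * (g y * L y) p q * e b y q)
        =ᶠ[nhds x] fun y => (if (a:ℕ)+(b:ℕ)+1 = n then ε else 0) * lam y
          + (if (a:ℕ)+(b:ℕ) = n then ε else 0) :=
      Filter.eventuallyEq_of_mem hUx fun y hy => by
        have h1 : ∑ p, ∑ q, e a y p * (g y * L y) p q * e b y q
            = e a y ⬝ᵥ (g y * L y) *ᵥ e b y := by
          simp [dotProduct, Matrix.mulVec, Finset.mul_sum, mul_assoc]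
        rw [h1, ← Matrix.mulVec_mulVec, hL y hy b]
        by_cases hb : (b:ℕ) = 0
        · have hab : ¬((a:ℕ)+(b:ℕ) = n) := by omega
          have han : ¬((a:ℕ) = n) := by omega
          simp [hb, hab, han, Matrix.mulVec_add, Matrix.mulVec_smul, dotProduct_add,
            dotProduct_smul, smul_eq_mul, (hg y hy).2 a b, mul_comm]
        · have h2 : e a y ⬝ᵥ g y *ᵥ (e (fp b) y) = if (a:ℕ)+(b:ℕ) = n then ε else 0 := by
            rw [(hg y hy).2 a (fp b)]
            refine if_congr ?_ rfl rfl
            simp only [hfpdef]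
            omega
          rw [dif_neg hb, Matrix.mulVec_add, Matrix.mulVec_smul, dotProduct_add,
            dotProduct_smul, smul_eq_mul, (hg y hy).2 a b]
          rw [show e a y ⬝ᵥ g y *ᵥ (e ⟨(b:ℕ)-1, by omega⟩ y)
            = e a y ⬝ᵥ g y *ᵥ (e (fp b) y) from rfl, h2]
          ring
    have hFMder : fderiv ℝ (fun y => ∑ p, ∑ q, e a y p * (g y * L y) p q * e b y q) x v
        = (if (a:ℕ)+(b:ℕ)+1 = n then ε else 0) * fderiv ℝ lam x v := by
      rw [hFMev.fderiv_eq, fderiv_add_const, fderiv_const_mul hdlam]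
      split_ifs <;> simp
    have hTS := fderiv_tripleSum_apply x v (e a) (e b) (fun y => g y * L y)
      (hde a) hdgl (hde b)
    have hP1' : (∑ p, ∑ q, (e a x p * e b x q) * fderiv ℝ (fun y => (g y * L y) p q) x v)
        = (if (a:ℕ)+(b:ℕ)+1 = n then ε else 0) * fderiv ℝ lam x v
          - (∑ p, ∑ q, fderiv ℝ (fun y => e a y p) x v * (g x * L x) p q * e b x q)
          - (∑ p, ∑ q, e a x p * (g x * L x) p q * fderiv ℝ (fun y => e b y q) x v) := by
      rw [← hFMder, hTS, sum2_sub_sub]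
      refine Finset.sum_congr rfl fun p _ => Finset.sum_congr rfl fun q _ => by ring
    have hP2 : (∑ p, ∑ q, ∑ k, ∑ l, e b x q * e a x p * v k
          * (christoffel g x l k p * (g x * L x) l q))
        = ∑ p, ∑ q, Gam v (e a x) p * (g x * L x) p q * e b x q := by
      calc (∑ p, ∑ q, ∑ k, ∑ l, e b x q * e a x p * v k
            * (christoffel g x l k p * (g x * L x) l q))
          = ∑ l, ∑ q, ∑ k, ∑ p, e b x q * e a x p * v k
            * (christoffel g x l k p * (g x * L x) l q) :=
            sum4_perm fun p q k l => e b x q * e a x p * v k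
              * (christoffel g x l k p * (g x * L x) l q)
        _ = ∑ p, ∑ q, Gam v (e a x) p * (g x * L x) p q * e b x q := by
            refine Finset.sum_congr rfl fun l _ => Finset.sum_congr rfl fun q _ => ?_
            simp only [hGamdef, Finset.sum_mul]
            exact Finset.sum_congr rfl fun k _ => Finset.sum_congr rfl fun p _ => by ring
    have hP3 : (∑ p, ∑ q, ∑ k, ∑ l, e b x q * e a x p * v k
          * (christoffel g x l k q * (g x * L x) p l))
        = ∑ p, ∑ q, e a x p * (g x * L x) p q * Gam v (e b x) q := by
      calc (∑ p, ∑ q, ∑ k, ∑ l, e b x q * e a x p * v k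
            * (christoffel g x l k q * (g x * L x) p l))
          = ∑ p, ∑ l, ∑ k, ∑ q, e b x q * e a x p * v k
            * (christoffel g x l k q * (g x * L x) p l) :=
            sum4_perm' fun p q k l => e b x q * e a x p * v k
              * (christoffel g x l k q * (g x * L x) p l)
        _ = ∑ p, ∑ q, e a x p * (g x * L x) p q * Gam v (e b x) q := by
            refine Finset.sum_congr rfl fun p _ => Finset.sum_congr rfl fun l _ => ?_
            simp only [hGamdef, Finset.mul_sum]
            exact Finset.sum_congr rfl fun k _ => Finset.sum_congr rfl fun q _ => by ring
    have hfact : ∀ (z w : Fin n → ℝ) (φ : (Fin n → ℝ) → ℝ),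
        (∑ p, ∑ q, ∑ k, (z p * pd p φ x) * (w q * g x q k * v k))
        = fderiv ℝ φ x z * pb w v := by
      intro z w φ
      calc (∑ p, ∑ q, ∑ k, (z p * pd p φ x) * (w q * g x q k * v k))
          = ∑ p, (z p * pd p φ x) * (∑ q, ∑ k, w q * g x q k * v k) := by
            refine Finset.sum_congr rfl fun p _ => ?_
            simp only [Finset.mul_sum]
        _ = (∑ p, z p * pd p φ x) * (∑ q, ∑ k, w q * g x q k * v k) := by
            rw [Finset.sum_mul]
        _ = fderiv ℝ φ x z * pb w v := by rw [dirsum, hpbdef]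
    have hRHS : (∑ p, ∑ q, ∑ k, (e a x p * e b x q * v k)
          * (pd p (fun y => 1/2 * (L y).trace) x * g x q k
            + pd q (fun y => 1/2 * (L y).trace) x * g x p k))
        = ((n:ℝ)/2) * fderiv ℝ lam x (e a x) * pb (e b x) v
          + ((n:ℝ)/2) * fderiv ℝ lam x (e b x) * pb (e a x) v := by
      calc (∑ p, ∑ q, ∑ k, (e a x p * e b x q * v k)
          * (pd p (fun y => 1/2 * (L y).trace) x * g x q k
            + pd q (fun y => 1/2 * (L y).trace) x * g x p k))
          = ∑ p, ∑ q, ∑ k, ((e a x p * pd p (fun y => 1/2 * (L y).trace) x)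
              * (e b x q * g x q k * v k)
            + (e b x q * pd q (fun y => 1/2 * (L y).trace) x)
              * (e a x p * g x p k * v k)) := by
            refine Finset.sum_congr rfl fun p _ => Finset.sum_congr rfl fun q _ =>
              Finset.sum_congr rfl fun k _ => by ring
        _ = (∑ p, ∑ q, ∑ k, (e a x p * pd p (fun y => 1/2 * (L y).trace) x)
              * (e b x q * g x q k * v k))
            + (∑ p, ∑ q, ∑ k, (e b x q * pd q (fun y => 1/2 * (L y).trace) x)
              * (e a x p * g x p k * v k)) := by
            simp only [Finset.sum_add_distrib]
        _ = (∑ p, ∑ q, ∑ k, (e a x p * pd p (fun y => 1/2 * (L y).trace) x)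
              * (e b x q * g x q k * v k))
            + (∑ q, ∑ p, ∑ k, (e b x q * pd q (fun y => 1/2 * (L y).trace) x)
              * (e a x p * g x p k * v k)) := by
            refine congrArg₂ (· + ·) rfl ?_
            exact Finset.sum_comm
        _ = ((n:ℝ)/2) * fderiv ℝ lam x (e a x) * pb (e b x) v
          + ((n:ℝ)/2) * fderiv ℝ lam x (e b x) * pb (e a x) v := by
            rw [hfact (e a x) (e b x) (fun y => 1/2 * (L y).trace),
              hfact (e b x) (e a x) (fun y => 1/2 * (L y).trace),
              hdird (e a x), hdird (e b x)]
    have hWa' : pM (W a) (e b x)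
        = (∑ p, ∑ q, fderiv ℝ (fun y => e a y p) x v * (g x * L x) p q * e b x q)
          + (∑ p, ∑ q, Gam v (e a x) p * (g x * L x) p q * e b x q) := by
      simp only [hpMdef, hWdef]
      rw [← Finset.sum_add_distrib]
      refine Finset.sum_congr rfl fun p _ => ?_
      rw [← Finset.sum_add_distrib]
      exact Finset.sum_congr rfl fun q _ => by ring
    have hWb' : pM (e a x) (W b)
        = (∑ p, ∑ q, e a x p * (g x * L x) p q * fderiv ℝ (fun y => e b y q) x v)
          + (∑ p, ∑ q, e a x p * (g x * L x) p q * Gam v (e b x) q) := by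
      simp only [hpMdef, hWdef]
      rw [← Finset.sum_add_distrib]
      refine Finset.sum_congr rfl fun p _ => ?_
      rw [← Finset.sum_add_distrib]
      exact Finset.sum_congr rfl fun q _ => by ring
    have E0 : (if (a:ℕ)+(b:ℕ)+1 = n then ε else 0) * fderiv ℝ lam x v
        - pM (W a) (e b x) - pM (e a x) (W b)
      = ((n:ℝ)/2) * fderiv ℝ lam x (e a x) * pb (e b x) v
        + ((n:ℝ)/2) * fderiv ℝ lam x (e b x) * pb (e a x) v := by
      have h := hcontr
      rw [hL1, hP1, hP1', hP2, hP3, hRHS] at h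
      rw [hWa', hWb']
      linarith [h]
    have hpbv : pb (e b x) v = if (b:ℕ)+(c:ℕ)+1 = n then ε else 0 := pbe b c
    have hpav : pb (e a x) v = if (a:ℕ)+(c:ℕ)+1 = n then ε else 0 := pbe a c
    rw [hpbv, hpav] at E0
    rw [pM_symm (e a x) (W b), pMshift (W a) b, pMshift (W b) a] at E0
    have h2 : lam x * pb (W a) (e b x) + lam x * pb (W b) (e a x) = 0 := by
      rw [← mul_add, AS0 a b, mul_zero]
    have h3 : (if (a:ℕ)+(b:ℕ)+1 = n then ε else 0) * fderiv ℝ lam x v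
        = (if (a:ℕ)+(b:ℕ)+1 = n then ε * fderiv ℝ lam x v else 0) := by
      split_ifs <;> ring
    rw [h3] at E0
    linarith [E0, h2]
  -- final summation over the antidiagonal a + b = i
  have pairzero : ∀ m : ℕ,
      (∑ a : Fin n, ∑ t : Fin n, if (a:ℕ)+(t:ℕ) = m then pb (W a) (e t x) else 0) = 0 := by
    intro m
    have h1 : (∑ a : Fin n, ∑ t : Fin n, if (a:ℕ)+(t:ℕ) = m then pb (W a) (e t x) else 0)
        = ∑ a : Fin n, ∑ t : Fin n, if (a:ℕ)+(t:ℕ) = m then pb (W t) (e a x) else 0 := by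
      rw [Finset.sum_comm]
      exact Finset.sum_congr rfl fun y _ => Finset.sum_congr rfl fun z _ =>
        if_congr (by omega) rfl rfl
    have hz : ∀ a t : Fin n, (if (a:ℕ)+(t:ℕ) = m then pb (W a) (e t x) else 0)
        + (if (a:ℕ)+(t:ℕ) = m then pb (W t) (e a x) else 0) = 0 := by
      intro a t
      split_ifs with h
      · exact AS0 a t
      · simp
    have h2 : (∑ a : Fin n, ∑ t : Fin n, if (a:ℕ)+(t:ℕ) = m then pb (W a) (e t x) else 0)
        + (∑ a : Fin n, ∑ t : Fin n, if (a:ℕ)+(t:ℕ) = m then pb (W t) (e a x) else 0) = 0 := by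
      rw [← Finset.sum_add_distrib]
      refine Finset.sum_eq_zero fun a _ => ?_
      rw [← Finset.sum_add_distrib]
      exact Finset.sum_eq_zero fun t _ => hz a t
    linarith [h1, h2]
  have hcol : ∀ a : Fin n,
      (∑ b : Fin n, if (a:ℕ)+(b:ℕ) = (i:ℕ)
          then (if (b:ℕ) = 0 then 0 else pb (W a) (e (fp b) x)) else 0)
      = ∑ t : Fin n, if (a:ℕ)+(t:ℕ) = (i:ℕ)-1 then pb (W a) (e t x) else 0 := by
    intro a
    by_cases ha : (a:ℕ) ≤ (i:ℕ)
    · have hb0 : (i:ℕ)-(a:ℕ) < n := by omega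
      have hLHSeq : (∑ b : Fin n, if (a:ℕ)+(b:ℕ) = (i:ℕ)
            then (if (b:ℕ) = 0 then 0 else pb (W a) (e (fp b) x)) else 0)
          = (if (((⟨(i:ℕ)-(a:ℕ), hb0⟩ : Fin n)) : ℕ) = 0 then 0
              else pb (W a) (e (fp ⟨(i:ℕ)-(a:ℕ), hb0⟩) x)) := by
        rw [← sum_single_cond ((i:ℕ)-(a:ℕ)) hb0
          (fun b => if (b:ℕ) = 0 then 0 else pb (W a) (e (fp b) x))]
        exact Finset.sum_congr rfl fun b _ => if_congr (by omega) rfl rfl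
      rw [hLHSeq]
      by_cases hai : (a:ℕ) = (i:ℕ)
      · have h0 : (((⟨(i:ℕ)-(a:ℕ), hb0⟩ : Fin n)) : ℕ) = 0 := by simp only [Fin.val_mk]; omega
        rw [if_pos h0]
        by_cases hi0 : (i:ℕ) = 0
        · have hR : (∑ t : Fin n, if (a:ℕ)+(t:ℕ) = (i:ℕ)-1 then pb (W a) (e t x) else 0)
              = pb (W a) (e (⟨0, by omega⟩ : Fin n) x) := by
            rw [← sum_single_cond 0 (by omega) (fun t => pb (W a) (e t x))]
            exact Finset.sum_congr rfl fun t _ => if_congr (by omega) rfl rfl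
          rw [hR]
          have haz : (⟨0, by omega⟩ : Fin n) = a := by
            apply Fin.ext; simp only [Fin.val_mk]; omega
          rw [show e (⟨0, by omega⟩ : Fin n) x = e a x from by rw [haz]]
          exact (ASdiag a).symm
        · symm
          exact Finset.sum_eq_zero fun t _ => if_neg (by omega)
      · have hne0 : ¬((((⟨(i:ℕ)-(a:ℕ), hb0⟩ : Fin n)) : ℕ) = 0) := by
          simp only [Fin.val_mk]; omega
        rw [if_neg hne0]
        have hRHSeq : (∑ t : Fin n, if (a:ℕ)+(t:ℕ) = (i:ℕ)-1 then pb (W a) (e t x) else 0)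
            = pb (W a) (e (⟨(i:ℕ)-1-(a:ℕ), by omega⟩ : Fin n) x) := by
          rw [← sum_single_cond ((i:ℕ)-1-(a:ℕ)) (by omega) (fun t => pb (W a) (e t x))]
          exact Finset.sum_congr rfl fun t _ => if_congr (by omega) rfl rfl
        rw [hRHSeq]
        have hfpv : fp (⟨(i:ℕ)-(a:ℕ), hb0⟩ : Fin n) = (⟨(i:ℕ)-1-(a:ℕ), by omega⟩ : Fin n) := by
          apply Fin.ext
          simp only [hfpdef, Fin.val_mk]
          omega
        rw [hfpv]
    · exact Eq.trans (Finset.sum_eq_zero fun b _ => if_neg (by omega))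
        (Finset.sum_eq_zero fun t _ => if_neg (by omega)).symm
  have hSB1 : (∑ a : Fin n, ∑ b : Fin n, if (a:ℕ)+(b:ℕ) = (i:ℕ)
        then (if (b:ℕ) = 0 then 0 else pb (W a) (e (fp b) x)) else 0) = 0 := by
    exact Eq.trans (Finset.sum_congr rfl fun a _ => hcol a) (pairzero ((i:ℕ)-1))
  have hSB2 : (∑ a : Fin n, ∑ b : Fin n, if (a:ℕ)+(b:ℕ) = (i:ℕ)
        then (if (a:ℕ) = 0 then 0 else pb (W b) (e (fp a) x)) else 0) = 0 := by
    rw [Finset.sum_comm]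
    refine Eq.trans (Finset.sum_congr rfl fun y _ => Finset.sum_congr rfl fun z _ =>
      if_congr (by omega) rfl rfl) hSB1
  have hS0 : (∑ a : Fin n, ∑ b : Fin n, if (a:ℕ)+(b:ℕ) = (i:ℕ)
        then (if (a:ℕ)+(b:ℕ)+1 = n then ε * fderiv ℝ lam x v else 0) else 0) = 0 := by
    refine Finset.sum_eq_zero fun a _ => Finset.sum_eq_zero fun b _ => ?_
    split_ifs with h1 h2
    · exact absurd h2 (by omega)
    · rfl
    · rfl
  have hbig : (∑ a : Fin n, ∑ b : Fin n, if (a:ℕ)+(b:ℕ) = (i:ℕ) then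
        ((if (a:ℕ)+(b:ℕ)+1 = n then ε * fderiv ℝ lam x v else 0)
          - (if (b:ℕ) = 0 then 0 else pb (W a) (e (fp b) x))
          - (if (a:ℕ) = 0 then 0 else pb (W b) (e (fp a) x))) else 0)
      = ∑ a : Fin n, ∑ b : Fin n, if (a:ℕ)+(b:ℕ) = (i:ℕ) then
        (((n:ℝ)/2) * fderiv ℝ lam x (e a x) * (if (b:ℕ)+(c:ℕ)+1 = n then ε else 0)
          + ((n:ℝ)/2) * fderiv ℝ lam x (e b x) * (if (a:ℕ)+(c:ℕ)+1 = n then ε else 0)) else 0 := by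
    refine Finset.sum_congr rfl fun a _ => Finset.sum_congr rfl fun b _ => ?_
    by_cases h : (a:ℕ)+(b:ℕ) = (i:ℕ)
    · rw [if_pos h, if_pos h]
      exact master a b
    · rw [if_neg h, if_neg h]
  have hLHS0 : (∑ a : Fin n, ∑ b : Fin n, if (a:ℕ)+(b:ℕ) = (i:ℕ) then
        ((if (a:ℕ)+(b:ℕ)+1 = n then ε * fderiv ℝ lam x v else 0)
          - (if (b:ℕ) = 0 then 0 else pb (W a) (e (fp b) x))
          - (if (a:ℕ) = 0 then 0 else pb (W b) (e (fp a) x))) else 0) = 0 := by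
    have hs : (∑ a : Fin n, ∑ b : Fin n, if (a:ℕ)+(b:ℕ) = (i:ℕ) then
          ((if (a:ℕ)+(b:ℕ)+1 = n then ε * fderiv ℝ lam x v else 0)
            - (if (b:ℕ) = 0 then 0 else pb (W a) (e (fp b) x))
            - (if (a:ℕ) = 0 then 0 else pb (W b) (e (fp a) x))) else 0)
        = (∑ a : Fin n, ∑ b : Fin n, if (a:ℕ)+(b:ℕ) = (i:ℕ)
            then (if (a:ℕ)+(b:ℕ)+1 = n then ε * fderiv ℝ lam x v else 0) else 0)
          - (∑ a : Fin n, ∑ b : Fin n, if (a:ℕ)+(b:ℕ) = (i:ℕ)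
            then (if (b:ℕ) = 0 then 0 else pb (W a) (e (fp b) x)) else 0)
          - (∑ a : Fin n, ∑ b : Fin n, if (a:ℕ)+(b:ℕ) = (i:ℕ)
            then (if (a:ℕ) = 0 then 0 else pb (W b) (e (fp a) x)) else 0) := by
      rw [sum2_sub_sub]
      refine Finset.sum_congr rfl fun a _ => Finset.sum_congr rfl fun b _ => ?_
      split_ifs <;> ring
    rw [hs, hS0, hSB1, hSB2]
    ring
  -- evaluate the right-hand side of hbig
  have hterm : ∀ a b : Fin n, (if (a:ℕ)+(b:ℕ) = (i:ℕ) then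
        (((n:ℝ)/2) * fderiv ℝ lam x (e a x) * (if (b:ℕ)+(c:ℕ)+1 = n then ε else 0)
          + ((n:ℝ)/2) * fderiv ℝ lam x (e b x) * (if (a:ℕ)+(c:ℕ)+1 = n then ε else 0)) else 0)
      = (if (a:ℕ) = (i:ℕ) ∧ (b:ℕ) = 0
          then ((n:ℝ)/2) * fderiv ℝ lam x (e a x) * ε else 0)
        + (if (a:ℕ) = 0 ∧ (b:ℕ) = (i:ℕ)
          then ((n:ℝ)/2) * fderiv ℝ lam x (e b x) * ε else 0) := by
    intro a b
    have hc' : (c:ℕ) = n - 1 := rfl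
    by_cases h1 : (a:ℕ)+(b:ℕ) = (i:ℕ)
    · rw [if_pos h1]
      by_cases h2 : (b:ℕ) = 0 <;> by_cases h3 : (a:ℕ) = 0
      · rw [if_pos (show (b:ℕ)+(c:ℕ)+1 = n by omega),
          if_pos (show (a:ℕ)+(c:ℕ)+1 = n by omega),
          if_pos ⟨by omega, h2⟩, if_pos ⟨h3, by omega⟩]
      · rw [if_pos (show (b:ℕ)+(c:ℕ)+1 = n by omega),
          if_neg (show ¬((a:ℕ)+(c:ℕ)+1 = n) by omega),
          if_pos ⟨by omega, h2⟩, if_neg (fun hh => h3 hh.1)]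
        ring
      · rw [if_neg (show ¬((b:ℕ)+(c:ℕ)+1 = n) by omega),
          if_pos (show (a:ℕ)+(c:ℕ)+1 = n by omega),
          if_neg (fun hh => h2 hh.2), if_pos ⟨h3, by omega⟩]
        ring
      · rw [if_neg (show ¬((b:ℕ)+(c:ℕ)+1 = n) by omega),
          if_neg (show ¬((a:ℕ)+(c:ℕ)+1 = n) by omega),
          if_neg (fun hh => h2 hh.2), if_neg (fun hh => h3 hh.1)]
        ring
    · rw [if_neg h1, if_neg (fun hh : (a:ℕ) = (i:ℕ) ∧ (b:ℕ) = 0 => h1 (by omega)),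
        if_neg (fun hh : (a:ℕ) = 0 ∧ (b:ℕ) = (i:ℕ) => h1 (by omega))]
      ring
  have hA : (∑ a : Fin n, ∑ b : Fin n, if (a:ℕ) = (i:ℕ) ∧ (b:ℕ) = 0
        then ((n:ℝ)/2) * fderiv ℝ lam x (e a x) * ε else 0)
      = ((n:ℝ)/2) * fderiv ℝ lam x (e i x) * ε := by
    have hinner : ∀ a : Fin n, (∑ b : Fin n, if (a:ℕ) = (i:ℕ) ∧ (b:ℕ) = 0
          then ((n:ℝ)/2) * fderiv ℝ lam x (e a x) * ε else 0)
        = (if (a:ℕ) = (i:ℕ) then ((n:ℝ)/2) * fderiv ℝ lam x (e a x) * ε else 0) := by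
      intro a
      by_cases hP : (a:ℕ) = (i:ℕ)
      · rw [if_pos hP]
        rw [show (fun b : Fin n => if (a:ℕ) = (i:ℕ) ∧ (b:ℕ) = 0
            then ((n:ℝ)/2) * fderiv ℝ lam x (e a x) * ε else 0)
          = fun b : Fin n => if (b:ℕ) = 0
            then ((n:ℝ)/2) * fderiv ℝ lam x (e a x) * ε else 0 from
          funext fun b => if_congr (and_iff_right hP) rfl rfl]
        exact sum_single_cond 0 (by omega) _
      · rw [if_neg hP]
        exact Finset.sum_eq_zero fun b _ => if_neg (fun hh => hP hh.1)
    rw [Finset.sum_congr rfl fun a _ => hinner a]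
    rw [sum_single_cond (i:ℕ) i.isLt (fun a => ((n:ℝ)/2) * fderiv ℝ lam x (e a x) * ε)]
  have hB : (∑ a : Fin n, ∑ b : Fin n, if (a:ℕ) = 0 ∧ (b:ℕ) = (i:ℕ)
        then ((n:ℝ)/2) * fderiv ℝ lam x (e b x) * ε else 0)
      = ((n:ℝ)/2) * fderiv ℝ lam x (e i x) * ε := by
    have hinner : ∀ a : Fin n, (∑ b : Fin n, if (a:ℕ) = 0 ∧ (b:ℕ) = (i:ℕ)
          then ((n:ℝ)/2) * fderiv ℝ lam x (e b x) * ε else 0)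
        = (if (a:ℕ) = 0 then ((n:ℝ)/2) * fderiv ℝ lam x (e i x) * ε else 0) := by
      intro a
      by_cases hP : (a:ℕ) = 0
      · rw [if_pos hP]
        rw [show (fun b : Fin n => if (a:ℕ) = 0 ∧ (b:ℕ) = (i:ℕ)
            then ((n:ℝ)/2) * fderiv ℝ lam x (e b x) * ε else 0)
          = fun b : Fin n => if (b:ℕ) = (i:ℕ)
            then ((n:ℝ)/2) * fderiv ℝ lam x (e b x) * ε else 0 from
          funext fun b => if_congr (and_iff_right hP) rfl rfl]
        rw [sum_single_cond (i:ℕ) i.isLt (fun b => ((n:ℝ)/2) * fderiv ℝ lam x (e b x) * ε)]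
      · rw [if_neg hP]
        exact Finset.sum_eq_zero fun b _ => if_neg (fun hh => hP hh.1)
    rw [Finset.sum_congr rfl fun a _ => hinner a]
    rw [sum_single_cond 0 (by omega) (fun _ => ((n:ℝ)/2) * fderiv ℝ lam x (e i x) * ε)]
  have hRHSval : (∑ a : Fin n, ∑ b : Fin n, if (a:ℕ)+(b:ℕ) = (i:ℕ) then
        (((n:ℝ)/2) * fderiv ℝ lam x (e a x) * (if (b:ℕ)+(c:ℕ)+1 = n then ε else 0)
          + ((n:ℝ)/2) * fderiv ℝ lam x (e b x) * (if (a:ℕ)+(c:ℕ)+1 = n then ε else 0)) else 0)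
      = (n:ℝ) * ε * fderiv ℝ lam x (e i x) := by
    rw [Finset.sum_congr rfl fun a _ => Finset.sum_congr rfl fun b _ => hterm a b]
    rw [show (∑ a : Fin n, ∑ b : Fin n, ((if (a:ℕ) = (i:ℕ) ∧ (b:ℕ) = 0
        then ((n:ℝ)/2) * fderiv ℝ lam x (e a x) * ε else 0)
      + (if (a:ℕ) = 0 ∧ (b:ℕ) = (i:ℕ)
        then ((n:ℝ)/2) * fderiv ℝ lam x (e b x) * ε else 0)))
      = (∑ a : Fin n, ∑ b : Fin n, if (a:ℕ) = (i:ℕ) ∧ (b:ℕ) = 0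
          then ((n:ℝ)/2) * fderiv ℝ lam x (e a x) * ε else 0)
        + (∑ a : Fin n, ∑ b : Fin n, if (a:ℕ) = 0 ∧ (b:ℕ) = (i:ℕ)
          then ((n:ℝ)/2) * fderiv ℝ lam x (e b x) * ε else 0) from by
      simp only [Finset.sum_add_distrib]]
    rw [hA, hB]
    ring
  have hfin : (n:ℝ) * ε * fderiv ℝ lam x (e i x) = 0 := by
    rw [← hRHSval, ← hbig, hLHS0]
  have hne : (n:ℝ) * ε ≠ 0 := by
    have hn0 : (n:ℝ) ≠ 0 := Nat.cast_ne_zero.mpr (by omega)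
    rcases hε with h|h <;> rw [h] <;> simp [hn0]
  exact (mul_eq_zero.mp hfin).resolve_left hne
end

section
/- Rigidity of polynomials with holomorphic coefficients whose roots have maximal imaginary part. Let U ⊆ ℂ^k be an open connected set and let a_0, …, a_{k−1} : U → ℂ be holomorphic functions. For z ∈ U let P_z(t) = t^k + a_{k−1}(z) t^{k−1} + … + a_1(z) t + a_0(z). Suppose there exist z_0 ∈ U and μ_0 ∈ ℂ such that P_{z_0}(t) = (t − μ_0)^k, and for every z ∈ U every complex root λ of P_z satisfies Im λ ≤ Im μ_0. Then P_z(t) = (t − μ_0)^k for all z ∈ U; in particular all roots of P_z are constant and equal to μ_0. -/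
open Polynomial

open Complex

/-- If a holomorphic function's imaginary part attains an interior max on a
connected open set, the imaginary part is constant. -/
lemma aux_im_eq_of_isMaxOn {E : Type*} [NormedAddCommGroup E] [NormedSpace ℂ E]
    {U : Set E} (hUo : IsOpen U) (hUc : IsPreconnected U)
    {g : E → ℂ} (hg : DifferentiableOn ℂ g U) {z0 : E} (hz0 : z0 ∈ U)
    (hle : ∀ z ∈ U, (g z).im ≤ (g z0).im) :
    ∀ z ∈ U, (g z).im = (g z0).im := by
  set F : E → ℂ := fun z => Complex.exp (-Complex.I * g z) with hF
  have hnorm : ∀ z, ‖F z‖ = Real.exp ((g z).im) := by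
    intro z
    simp [hF, Complex.norm_exp]
  have hFd : DifferentiableOn ℂ F U := (hg.const_mul _).cexp
  have hmax : IsMaxOn (norm ∘ F) U z0 := by
    intro z hz
    simp only [Function.comp_apply, hnorm]
    exact Real.exp_le_exp.2 (hle z hz)
  have := Complex.eqOn_of_isPreconnected_of_isMaxOn_norm hUc hUo hFd hz0 hmax
  intro z hz
  have h1 : ‖F z‖ = ‖F z0‖ := by rw [this hz]; rfl
  rw [hnorm, hnorm] at h1
  exact Real.exp_injective h1

/-- A holomorphic function which is real-valued on a connected open set is constant. -/
lemma aux_real_const {E : Type*} [NormedAddCommGroup E] [NormedSpace ℂ E]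
    {U : Set E} (hUo : IsOpen U) (hUc : IsPreconnected U)
    {g : E → ℂ} (hg : DifferentiableOn ℂ g U)
    (him : ∀ z ∈ U, (g z).im = 0) {z0 : E} (hz0 : z0 ∈ U) :
    ∀ z ∈ U, g z = g z0 := by
  intro z1 hz1
  by_contra hne
  set r : ℝ := (g z1).re - (g z0).re with hr
  have hgd : g z1 - g z0 = (r : ℂ) := by
    apply Complex.ext
    · simp [hr]
    · simp [him z1 hz1, him z0 hz0]
  have hrne : r ≠ 0 := by
    intro h0
    apply hne
    have : g z1 - g z0 = 0 := by rw [hgd, h0, Complex.ofReal_zero]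
    exact sub_eq_zero.1 this
  set s : ℝ := Real.pi / r with hs
  set F : E → ℂ := fun z => Complex.exp ((s : ℂ) * Complex.I * (g z - g z0)) with hF
  have hnorm : ∀ z ∈ U, ‖F z‖ = 1 := by
    intro z hz
    have : ((s : ℂ) * Complex.I * (g z - g z0)).re = 0 := by
      simp [Complex.mul_re, Complex.mul_im, him z hz, him z0 hz0]
    simp [hF, Complex.norm_exp, this]
  have hFd : DifferentiableOn ℂ F U := ((hg.sub_const _).const_mul _).cexp
  have hmax : IsMaxOn (norm ∘ F) U z0 := by
    intro z hz
    show ‖F z‖ ≤ ‖F z0‖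
    rw [hnorm z hz, hnorm z0 hz0]
  have heq := Complex.eqOn_of_isPreconnected_of_isMaxOn_norm hUc hUo hFd hz0 hmax hz1
  have hFz0 : F z0 = 1 := by simp [hF]
  have hFz1 : F z1 = -1 := by
    rw [hF]
    simp only
    rw [hgd]
    have : (s : ℂ) * Complex.I * (r : ℂ) = (Real.pi : ℂ) * Complex.I := by
      rw [hs]
      push_cast
      rw [mul_right_comm, div_mul_cancel₀ _ (Complex.ofReal_ne_zero.2 hrne)]
    rw [this, Complex.exp_pi_mul_I]
  rw [hFz1, hFz0] at heq
  norm_num [Function.const] at heq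

/-- rigidity of polynomials with holomorphic coefficients whose
roots have maximal imaginary part. -/
theorem holomorphic_coefficients_rigidity
    (k : ℕ) (U : Set (Fin k → ℂ)) (hUopen : IsOpen U) (hUconn : IsConnected U)
    (a : Fin k → (Fin k → ℂ) → ℂ)
    (ha : ∀ j : Fin k, DifferentiableOn ℂ (a j) U)
    (P : (Fin k → ℂ) → Polynomial ℂ)
    (hP : ∀ z : Fin k → ℂ, P z = X ^ k + ∑ j : Fin k, C (a j z) * X ^ (j : ℕ))
    (μ0 : ℂ) (z0 : Fin k → ℂ) (hz0 : z0 ∈ U)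
    (hinit : P z0 = (X - C μ0) ^ k)
    (hroots : ∀ z ∈ U, ∀ t : ℂ, (P z).IsRoot t → t.im ≤ μ0.im) :
    ∀ z ∈ U, P z = (X - C μ0) ^ k := by
  rcases Nat.eq_zero_or_pos k with hk0 | hk
  · subst hk0
    intro z hz
    rw [hP z]
    simp
  -- basic degree facts
  have hSdeg : ∀ w, (∑ j : Fin k, C (a j w) * X ^ (j : ℕ)).degree < (k : WithBot ℕ) := by
    intro w
    refine lt_of_le_of_lt (Polynomial.degree_sum_le _ _) ?_
    rw [Finset.sup_lt_iff (by exact_mod_cast WithBot.bot_lt_coe k)]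
    intro j _
    exact lt_of_le_of_lt (degree_C_mul_X_pow_le _ _) (by exact_mod_cast j.2)
  have hmono : ∀ w, (P w).Monic := by
    intro w; rw [hP w]; exact monic_X_pow_add (hSdeg w)
  have hdeg : ∀ w, (P w).natDegree = k := by
    intro w
    apply natDegree_eq_of_degree_eq_some
    rw [hP w, degree_add_eq_left_of_degree_lt, degree_X_pow]
    rw [degree_X_pow]; exact hSdeg w
  have hsplits : ∀ w, (P w).Splits := fun w => IsAlgClosed.splits _
  have hcard : ∀ w, (P w).roots.card = k := fun w =>
    (splits_iff_card_roots.mp (hsplits w)).trans (hdeg w)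
  set jlast : Fin k := ⟨k - 1, by omega⟩ with hjlast
  have hcoeff : ∀ w, (P w).coeff (k - 1) = a jlast w := by
    intro w
    rw [hP w, coeff_add, finset_sum_coeff]
    have h1 : (X ^ k : ℂ[X]).coeff (k - 1) = 0 := by
      rw [coeff_X_pow, if_neg (by omega)]
    rw [h1, zero_add]
    rw [Finset.sum_eq_single jlast]
    · simp [coeff_C_mul, coeff_X_pow, hjlast]
    · intro j _ hj
      rw [coeff_C_mul, coeff_X_pow, if_neg, mul_zero]
      intro h
      exact hj (Fin.ext (by simpa [hjlast] using h.symm))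
    · simp
  have hsum : ∀ w, (P w).roots.sum = -(a jlast w) := by
    intro w
    have h := (hsplits w).nextCoeff_eq_neg_sum_roots_of_monic (hmono w)
    rw [nextCoeff_of_natDegree_pos (by rw [hdeg w]; omega), hdeg w, hcoeff w] at h
    linear_combination h
  -- imaginary part of sum of roots
  have himsum : ∀ (s : Multiset ℂ), s.sum.im = (s.map Complex.im).sum := fun s =>
    map_multiset_sum (AddMonoidHom.mk' Complex.im (fun x y => Complex.add_im x y)) s
  set g : (Fin k → ℂ) → ℂ := fun w => -(a jlast w) with hg
  have hgroots : ∀ w, g w = (P w).roots.sum := fun w => (hsum w).symm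
  have hrootsz0 : (P z0).roots = Multiset.replicate k μ0 := by
    rw [hinit, roots_pow, roots_X_sub_C, Multiset.nsmul_singleton]
  have hgz0 : (g z0).im = k * μ0.im := by
    rw [hgroots, hrootsz0, Multiset.sum_replicate]
    simp
  have him_le : ∀ w ∈ U, (g w).im ≤ (g z0).im := by
    intro w hw
    rw [hgz0, hgroots, himsum]
    calc ((P w).roots.map Complex.im).sum
        ≤ ((P w).roots.map Complex.im).card • μ0.im := by
          apply Multiset.sum_le_card_nsmul
          intro x hx
          obtain ⟨r, hr, rfl⟩ := Multiset.mem_map.1 hx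
          exact hroots w hw r (isRoot_of_mem_roots hr)
      _ = k * μ0.im := by rw [Multiset.card_map, hcard w, nsmul_eq_mul]
  have him_eq := aux_im_eq_of_isMaxOn hUopen hUconn.isPreconnected
    ((ha jlast).neg) hz0 him_le
  -- every root has imaginary part μ0.im
  have hrootim : ∀ w ∈ U, ∀ r ∈ (P w).roots, r.im = μ0.im := by
    intro w hw r hr
    refine le_antisymm (hroots w hw r (isRoot_of_mem_roots hr)) ?_
    by_contra hlt
    push_neg at hlt
    obtain ⟨T, hT⟩ := Multiset.exists_cons_of_mem hr
    have hTcard : T.card = k - 1 := by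
      have := hcard w
      rw [hT, Multiset.card_cons] at this
      omega
    have hTsum : (T.map Complex.im).sum ≤ ((k : ℝ) - 1) * μ0.im := by
      have h1 : (T.map Complex.im).sum ≤ (T.map Complex.im).card • μ0.im := by
        apply Multiset.sum_le_card_nsmul
        intro x hx
        obtain ⟨s, hs, rfl⟩ := Multiset.mem_map.1 hx
        exact hroots w hw s (isRoot_of_mem_roots (by rw [hT]; exact Multiset.mem_cons_of_mem hs))
      rw [Multiset.card_map, hTcard, nsmul_eq_mul] at h1
      have : ((k - 1 : ℕ) : ℝ) = (k : ℝ) - 1 := by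
        push_cast [Nat.cast_sub hk]
        ring
      rwa [this] at h1
    have htot : (g w).im = k * μ0.im := (him_eq w hw).trans hgz0
    rw [hgroots, himsum, hT, Multiset.map_cons, Multiset.sum_cons] at htot
    have hk' : (1 : ℝ) ≤ (k : ℝ) := by exact_mod_cast hk
    nlinarith [hTsum, hlt]
  -- the shifted polynomial has real coefficients
  have hQfact : ∀ w ∈ U, (P w).comp (X + C μ0) =
      ((P w).roots.map (fun r => X - C (r - μ0))).prod := by
    intro w hw
    conv_lhs => rw [(hsplits w).eq_prod_roots_of_monic (hmono w)]
    rw [multiset_prod_comp, Multiset.map_map]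
    congr 1
    apply Multiset.map_congr rfl
    intro r _
    simp only [Function.comp_apply, sub_comp, X_comp, C_comp, map_sub]
    ring
  have hQim : ∀ (n : ℕ), ∀ w ∈ U, (((P w).comp (X + C μ0)).coeff n).im = 0 := by
    intro n w hw
    have hmapQ : ((P w).comp (X + C μ0)).map (starRingEnd ℂ) = (P w).comp (X + C μ0) := by
      rw [hQfact w hw, Polynomial.map_multiset_prod, Multiset.map_map]
      congr 1
      apply Multiset.map_congr rfl
      intro r hr
      have hc : (starRingEnd ℂ) (r - μ0) = r - μ0 :=
        Complex.conj_eq_iff_im.2 (by simp [hrootim w hw r hr])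
      show ((X : ℂ[X]) - C (r - μ0)).map (starRingEnd ℂ) = X - C (r - μ0)
      rw [Polynomial.map_sub, Polynomial.map_X, Polynomial.map_C, hc]
    have := congrArg (fun q => q.coeff n) hmapQ
    simp only [Polynomial.coeff_map] at this
    exact Complex.conj_eq_iff_im.1 this
  -- coefficient functions are holomorphic
  set b : ℕ → (Fin k → ℂ) → ℂ := fun n w =>
    ((X + C μ0 : ℂ[X]) ^ k).coeff n + ∑ j : Fin k, a j w * ((X + C μ0 : ℂ[X]) ^ (j : ℕ)).coeff n
    with hb
  have hbQ : ∀ (n : ℕ) (w : Fin k → ℂ), ((P w).comp (X + C μ0)).coeff n = b n w := by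
    intro n w
    rw [hP w]
    simp [add_comp, sum_comp, mul_comp, C_comp, X_pow_comp, pow_comp, X_comp,
      coeff_add, finset_sum_coeff, coeff_C_mul, hb]
  have hbdiff : ∀ n : ℕ, DifferentiableOn ℂ (b n) U := by
    intro n
    apply DifferentiableOn.add (differentiableOn_const _)
    exact DifferentiableOn.fun_sum fun j _ => (ha j).mul_const _
  have hbim : ∀ (n : ℕ), ∀ w ∈ U, (b n w).im = 0 := by
    intro n w hw
    rw [← hbQ n w]
    exact hQim n w hw
  have hbconst : ∀ (n : ℕ), ∀ w ∈ U, b n w = b n z0 := fun n w hw =>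
    aux_real_const hUopen hUconn.isPreconnected (hbdiff n) (hbim n) hz0 w hw
  have hQz0 : (P z0).comp (X + C μ0) = X ^ k := by
    rw [hinit, pow_comp, sub_comp, X_comp, C_comp]
    simp
  -- conclude
  intro z hz
  have hQz : (P z).comp (X + C μ0) = X ^ k := by
    apply Polynomial.ext
    intro n
    rw [hbQ n z, hbconst n z hz, ← hbQ n z0, hQz0]
  calc P z = ((P z).comp (X + C μ0)).comp (X - C μ0) := by
        rw [comp_assoc]
        simp [add_comp, X_comp, C_comp]
    _ = (X ^ k).comp (X - C μ0) := by rw [hQz]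
    _ = (X - C μ0) ^ k := X_pow_comp
end

section
/- Canonical complex structure associated with an operator without real eigenvalues. Let V be a finite-dimensional real vector space and let L : V → V be a linear map with no real eigenvalues. Then there exists a unique linear map J : V → V such that: (i) J∘J = −id_V; (ii) J∘L = L∘J; and (iii) for every μ ∈ ℂ with Im μ > 0, the generalized eigenspace of the complexification L_ℂ : ℂ⊗V → ℂ⊗V for the eigenvalue μ (i.e. ker (L_ℂ − μ·id)^{dim V}) is contained in the eigenspace ker(J_ℂ − i·id) of the complexification J_ℂ of J. -/
open TensorProduct Polynomial Module

namespace CanonicalCSAux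

variable {V : Type*} [AddCommGroup V] [Module ℝ V]

/-- real-part retraction -/
noncomputable def rho : ℂ ⊗[ℝ] V →ₗ[ℝ] V :=
  TensorProduct.lift ((LinearMap.lsmul ℝ V).comp Complex.reLm)

@[simp] lemma rho_tmul (c : ℂ) (x : V) : rho (c ⊗ₜ[ℝ] x) = c.re • x := rfl

/-- conjugation on ℂ ⊗ V -/
noncomputable def sig : ℂ ⊗[ℝ] V →ₗ[ℝ] ℂ ⊗[ℝ] V :=
  TensorProduct.map Complex.conjAe.toLinearMap LinearMap.id

@[simp] lemma sig_tmul (c : ℂ) (x : V) :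
    sig (c ⊗ₜ[ℝ] x) = (starRingEnd ℂ c) ⊗ₜ[ℝ] x := rfl

lemma sig_sig (z : ℂ ⊗[ℝ] V) : sig (sig z) = z := by
  induction z with
  | zero => simp
  | tmul c x => simp
  | add a b ha hb => simp [ha, hb]

lemma sig_smul (c : ℂ) (z : ℂ ⊗[ℝ] V) :
    sig (c • z) = (starRingEnd ℂ c) • sig z := by
  induction z with
  | zero => simp
  | tmul d x => rw [smul_tmul']; simp [smul_tmul', smul_eq_mul, map_mul]
  | add a b ha hb => simp [smul_add, ha, hb]

lemma sig_baseChange (f : V →ₗ[ℝ] V) (z : ℂ ⊗[ℝ] V) :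
    sig (f.baseChange ℂ z) = f.baseChange ℂ (sig z) := by
  induction z with
  | zero => simp
  | tmul c x => simp
  | add a b ha hb => simp [ha, hb]

lemma decomp (z : ℂ ⊗[ℝ] V) :
    z = (1 : ℂ) ⊗ₜ[ℝ] rho z + Complex.I ⊗ₜ[ℝ] rho ((-Complex.I) • z) := by
  induction z with
  | zero => simp
  | tmul c x =>
      rw [smul_tmul']
      simp only [rho_tmul, smul_eq_mul]
      rw [← TensorProduct.smul_tmul, ← TensorProduct.smul_tmul, ← TensorProduct.add_tmul]
      congr 1
      simp [Complex.real_smul, Complex.ext_iff]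
  | add a b ha hb =>
      rw [map_add, smul_add, map_add, tmul_add, tmul_add]
      nth_rewrite 1 [ha]
      nth_rewrite 1 [hb]
      abel

lemma fixed_eq (w : ℂ ⊗[ℝ] V) (hw : sig w = w) : w = (1 : ℂ) ⊗ₜ[ℝ] rho w := by
  set r := rho w with hr
  set y := rho ((-Complex.I) • w) with hy
  have hd : w = (1 : ℂ) ⊗ₜ[ℝ] r + Complex.I ⊗ₜ[ℝ] y := decomp w
  have hs' : w = (1 : ℂ) ⊗ₜ[ℝ] r + (-Complex.I) ⊗ₜ[ℝ] y := by
    conv_lhs => rw [← hw, hd]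
    simp [Complex.conj_I]
  have key : Complex.I ⊗ₜ[ℝ] y + (-Complex.I) ⊗ₜ[ℝ] y = (0 : ℂ ⊗[ℝ] V) := by
    rw [← TensorProduct.add_tmul]; simp
  have h2 : (2:ℝ) • w = (2:ℝ) • ((1 : ℂ) ⊗ₜ[ℝ] r) := by
    rw [two_smul, two_smul]
    nth_rewrite 1 [hd]
    nth_rewrite 1 [hs']
    rw [show ((1:ℂ) ⊗ₜ[ℝ] r + Complex.I ⊗ₜ[ℝ] y) + ((1:ℂ) ⊗ₜ[ℝ] r + (-Complex.I) ⊗ₜ[ℝ] y)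
        = ((1:ℂ) ⊗ₜ[ℝ] r + (1:ℂ) ⊗ₜ[ℝ] r) + (Complex.I ⊗ₜ[ℝ] y + (-Complex.I) ⊗ₜ[ℝ] y) by abel]
    rw [key, add_zero]
  exact smul_right_injective _ (by norm_num : (2:ℝ) ≠ 0) h2

lemma descend (B : Module.End ℂ (ℂ ⊗[ℝ] V)) (hB : ∀ z, sig (B z) = B (sig z)) :
    LinearMap.baseChange ℂ (rho ∘ₗ (B.restrictScalars ℝ) ∘ₗ TensorProduct.mk ℝ ℂ V 1) = B := by
  apply LinearMap.ext
  intro z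
  induction z with
  | zero => simp
  | tmul c x =>
      have hfix : sig (B ((1:ℂ) ⊗ₜ[ℝ] x)) = B ((1:ℂ) ⊗ₜ[ℝ] x) := by
        rw [hB]; congr 1; simp
      have hw := fixed_eq _ hfix
      have hx : (c : ℂ) ⊗ₜ[ℝ] x = c • ((1:ℂ) ⊗ₜ[ℝ] x) := by
        rw [smul_tmul']; simp
      rw [LinearMap.baseChange_tmul]
      rw [hx, map_smul]
      conv_rhs => rw [hw]
      rw [smul_tmul']
      simp
  | add a b ha hb => simp [ha, hb]

lemma baseChange_inj {f g : V →ₗ[ℝ] V} (h : f.baseChange ℂ = g.baseChange ℂ) : f = g := by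
  ext x
  have := congrArg (fun B : ℂ ⊗[ℝ] V →ₗ[ℂ] ℂ ⊗[ℝ] V => rho (B ((1:ℂ) ⊗ₜ[ℝ] x))) h
  simpa using this

lemma sig_sub_pow (f : V →ₗ[ℝ] V) (μ : ℂ) (k : ℕ) (z : ℂ ⊗[ℝ] V) :
    sig ((((f.baseChange ℂ - μ • LinearMap.id : Module.End ℂ (ℂ ⊗[ℝ] V))) ^ k) z)
      = (((f.baseChange ℂ - (starRingEnd ℂ μ) • LinearMap.id : Module.End ℂ (ℂ ⊗[ℝ] V))) ^ k)
        (sig z) := by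
  induction k generalizing z with
  | zero => simp
  | succ k ih =>
      rw [pow_succ, Module.End.mul_apply, pow_succ, Module.End.mul_apply, ih]
      congr 1
      rw [LinearMap.sub_apply, LinearMap.sub_apply, LinearMap.smul_apply, LinearMap.smul_apply,
        LinearMap.id_apply, LinearMap.id_apply, map_sub, sig_smul, sig_baseChange]

lemma sig_aeval (f : V →ₗ[ℝ] V) (q : ℂ[X]) (z : ℂ ⊗[ℝ] V) :
    sig (aeval (f.baseChange ℂ) q z)
      = aeval (f.baseChange ℂ) (q.map (starRingEnd ℂ)) (sig z) := by
  induction q using Polynomial.induction_on with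
  | C a =>
      simp only [aeval_C, Polynomial.map_C]
      rw [Module.algebraMap_end_eq_smul_id, Module.algebraMap_end_eq_smul_id,
        LinearMap.smul_apply, LinearMap.id_apply, LinearMap.smul_apply, LinearMap.id_apply,
        sig_smul]
  | add p q hp hq =>
      simp only [map_add, Polynomial.map_add, LinearMap.add_apply, hp, hq]
  | monomial k a _ =>
      simp only [Polynomial.map_mul, Polynomial.map_C, Polynomial.map_pow, Polynomial.map_X,
        map_mul, map_pow, aeval_C, aeval_X]
      rw [Module.End.mul_apply, Module.End.mul_apply]
      rw [Module.algebraMap_end_eq_smul_id, Module.algebraMap_end_eq_smul_id,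
        LinearMap.smul_apply, LinearMap.id_apply, LinearMap.smul_apply, LinearMap.id_apply,
        sig_smul]
      congr 1
      rw [← LinearMap.baseChange_pow, sig_baseChange, LinearMap.baseChange_pow]

lemma baseChange_aeval (f : V →ₗ[ℝ] V) (p : ℝ[X]) :
    LinearMap.baseChange ℂ (aeval f p) = aeval (f.baseChange ℂ) (p.map (algebraMap ℝ ℂ)) := by
  induction p using Polynomial.induction_on with
  | C a =>
      rw [aeval_C, Polynomial.map_C, aeval_C, Module.algebraMap_end_eq_smul_id,
        Module.algebraMap_end_eq_smul_id, LinearMap.baseChange_smul, LinearMap.baseChange_id,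
        algebraMap_smul]
  | add p q hp hq =>
      rw [map_add, Polynomial.map_add, map_add, LinearMap.baseChange_add, hp, hq]
  | monomial k a ih =>
      simp only [Polynomial.map_mul, Polynomial.map_C, Polynomial.map_pow, Polynomial.map_X,
        map_mul, map_pow, aeval_C, aeval_X]
      rw [Module.algebraMap_end_eq_smul_id, Module.algebraMap_end_eq_smul_id]
      rw [LinearMap.baseChange_mul, LinearMap.baseChange_smul, LinearMap.baseChange_id,
        LinearMap.baseChange_pow, algebraMap_smul]

/-- CRT for polynomials over ℂ -/
lemma crt (s : Finset ℂ) (n : ℕ) (c : ℂ → ℂ) :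
    ∃ p : ℂ[X], ∀ μ ∈ s, (X - C μ) ^ n ∣ p - C (c μ) := by
  classical
  induction s using Finset.induction_on with
  | empty => exact ⟨0, by simp⟩
  | insert μ₀ s hμ₀ _ =>
    obtain ⟨p, hp⟩ := ‹∃ p : ℂ[X], ∀ μ ∈ s, (X - C μ) ^ n ∣ p - C (c μ)›
    have hcop : IsCoprime (∏ μ ∈ s, (X - C μ) ^ n) ((X - C μ₀) ^ n) := by
      apply IsCoprime.prod_left
      intro μ hμ
      exact (Polynomial.isCoprime_X_sub_C_of_isUnit_sub
        (isUnit_iff_ne_zero.mpr (sub_ne_zero.mpr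
          (fun h => hμ₀ (by rw [← h]; exact hμ))))).pow
    obtain ⟨a, b, hab⟩ := hcop
    set g : ℂ[X] := ∏ μ ∈ s, (X - C μ) ^ n with hg
    refine ⟨p + g * (a * (C (c μ₀) - p)), ?_⟩
    intro μ hμ
    rcases Finset.mem_insert.mp hμ with rfl | hμs
    · refine ⟨b * (p - C (c μ)), ?_⟩
      linear_combination (C (c μ) - p) * hab
    · obtain ⟨d, hd⟩ := hp μ hμs
      have hdvd : (X - C μ) ^ n ∣ g := Finset.dvd_prod_of_mem _ hμs
      have : p + g * (a * (C (c μ₀) - p)) - C (c μ)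
          = (p - C (c μ)) + g * (a * (C (c μ₀) - p)) := by ring
      rw [this]
      exact dvd_add (Dvd.intro _ hd.symm) (hdvd.mul_right _)

/-- kill lemma -/
lemma aeval_eq_zero_of_dvd {W : Type*} [AddCommGroup W] [Module ℂ W] [FiniteDimensional ℂ W]
    (f : Module.End ℂ W) (p : ℂ[X])
    (h : ∀ μ : ℂ, f.HasEigenvalue μ → (X - C μ) ^ (finrank ℂ W) ∣ p) :
    aeval f p = 0 := by
  rw [← LinearMap.ker_eq_top, ← top_le_iff, ← Module.End.iSup_maxGenEigenspace_eq_top f,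
    iSup_le_iff]
  intro μ
  rcases eq_or_ne (f.maxGenEigenspace μ) ⊥ with hbot | hne
  · rw [hbot]; exact bot_le
  · have hfin := Module.End.maxGenEigenspace_eq_genEigenspace_finrank f μ
    have heig : f.HasEigenvalue μ := by
      rcases Nat.eq_zero_or_pos (finrank ℂ W) with h0 | hpos
      · exfalso; apply hne; rw [hfin, h0]; simp
      · have hgen : f.HasGenEigenvalue μ (finrank ℂ W) := by
          rw [hfin] at hne; exact hne
        exact Module.End.hasEigenvalue_of_hasGenEigenvalue hgen
    obtain ⟨g, hg⟩ := h μ heig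
    rw [hfin, Module.End.genEigenspace_nat]
    intro v hv
    rw [LinearMap.mem_ker] at hv
    rw [LinearMap.mem_ker]
    have hXC : aeval f ((X - C μ) ^ (finrank ℂ W)) = (f - μ • 1) ^ (finrank ℂ W) := by
      rw [map_pow, map_sub, aeval_X, aeval_C, Module.algebraMap_end_eq_smul_id]
      rfl
    rw [hg, mul_comm, map_mul, Module.End.mul_apply, hXC, hv, map_zero]

end CanonicalCSAux

set_option maxHeartbeats 1000000 in
open CanonicalCSAux in
/-- canonical complex structure associated with an operator with no
real eigenvalues: there is a unique `J` with `J² = -id`, `JL = LJ`, and such that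
for every eigenvalue `μ` of the complexification with positive imaginary part,
the generalized `μ`-eigenspace of `L_ℂ` lies in the `i`-eigenspace of `J_ℂ`. -/
theorem canonical_complex_structure
    (V : Type*) [AddCommGroup V] [Module ℝ V] [FiniteDimensional ℝ V]
    (L : V →ₗ[ℝ] V)
    (hnoreal : ∀ μ : ℝ, LinearMap.ker (L - μ • LinearMap.id) = ⊥) :
    ∃! J : V →ₗ[ℝ] V,
      J ∘ₗ J = -LinearMap.id ∧
      J ∘ₗ L = L ∘ₗ J ∧
      ∀ μ : ℂ, 0 < μ.im →
        LinearMap.ker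
          ((LinearMap.baseChange ℂ L - μ • LinearMap.id :
              Module.End ℂ (ℂ ⊗[ℝ] V)) ^ Module.finrank ℝ V)
          ≤ LinearMap.ker
            (LinearMap.baseChange ℂ J - Complex.I • LinearMap.id :
              Module.End ℂ (ℂ ⊗[ℝ] V)) := by
  classical
  set n := Module.finrank ℝ V with hn
  set A : Module.End ℂ (ℂ ⊗[ℝ] V) := LinearMap.baseChange ℂ L with hA
  have hfr : finrank ℂ (ℂ ⊗[ℝ] V) = n := Module.finrank_baseChange
  -- A has no real eigenvalues
  have hnotreal : ∀ μ : ℂ, A.HasEigenvalue μ → μ.im ≠ 0 := by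
    intro μ hμ h0
    have hdvd : minpoly ℂ A ∣ (minpoly ℝ L).map (algebraMap ℝ ℂ) := by
      apply minpoly.dvd
      rw [hA, ← baseChange_aeval, minpoly.aeval]
      ext z
      simp
    have hroot : ((minpoly ℝ L).map (algebraMap ℝ ℂ)).IsRoot μ :=
      (Module.End.hasEigenvalue_iff_isRoot.mp hμ).dvd hdvd
    have hμre : μ = algebraMap ℝ ℂ μ.re := by
      apply Complex.ext <;> simp [h0]
    rw [hμre, Polynomial.IsRoot, Polynomial.eval_map, Polynomial.eval₂_at_apply] at hroot
    have hre : (minpoly ℝ L).IsRoot μ.re := by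
      simpa using hroot
    have hL := Module.End.hasEigenvalue_iff_isRoot.mpr hre
    apply hL
    rw [Module.End.genEigenspace_one]
    have := hnoreal μ.re
    rwa [Module.End.one_eq_id]
  have hAint : IsIntegral ℂ A := Algebra.IsIntegral.isIntegral A
  set m := minpoly ℂ A with hm
  have hm0 : m ≠ 0 := minpoly.ne_zero hAint
  set R : Finset ℂ := m.roots.toFinset with hR
  have hmemR : ∀ μ : ℂ, A.HasEigenvalue μ ↔ μ ∈ R := by
    intro μ
    rw [hR, Multiset.mem_toFinset, Polynomial.mem_roots hm0,
      Module.End.hasEigenvalue_iff_isRoot]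
  have hconjR : ∀ μ ∈ R, (starRingEnd ℂ) μ ∈ R := by
    intro μ hμ
    rw [← hmemR] at hμ ⊢
    obtain ⟨v, hv⟩ := hμ.exists_hasEigenvector
    refine Module.End.hasEigenvalue_of_hasEigenvector (x := sig v) ⟨?_, ?_⟩
    · rw [Module.End.mem_eigenspace_iff]
      have h1 : A (sig v) = sig (A v) := (sig_baseChange L v).symm
      rw [h1, hv.apply_eq_smul, sig_smul]
    · intro h
      apply hv.2
      have := congrArg sig h
      rwa [sig_sig, map_zero] at this
  -- CRT
  obtain ⟨p, hp⟩ := crt R n (fun μ => if 0 < μ.im then Complex.I else -Complex.I)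
  set q : ℂ[X] := Polynomial.C (2⁻¹ : ℂ) * (p + p.map (starRingEnd ℂ)) with hq
  have hqconj : q.map (starRingEnd ℂ) = q := by
    rw [hq, Polynomial.map_mul, Polynomial.map_add, Polynomial.map_map, Polynomial.map_C]
    have hcc : (starRingEnd ℂ).comp (starRingEnd ℂ) = RingHom.id ℂ :=
      RingHom.ext fun z => Complex.conj_conj z
    rw [hcc, Polynomial.map_id]
    have : (starRingEnd ℂ) (2⁻¹ : ℂ) = (2⁻¹ : ℂ) := by
      simp [Complex.ext_iff]
    rw [this, add_comm]
  have hqdvd : ∀ μ ∈ R,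
      (X - C μ) ^ n ∣ q - C (if 0 < μ.im then Complex.I else -Complex.I) := by
    intro μ hμ
    have him : μ.im ≠ 0 := hnotreal μ ((hmemR μ).mpr hμ)
    set cμ : ℂ := if 0 < μ.im then Complex.I else -Complex.I with hc
    obtain ⟨d1, hd1⟩ := hp μ hμ
    obtain ⟨d2', hd2'⟩ := hp _ (hconjR μ hμ)
    have hconjc : (starRingEnd ℂ)
        (if 0 < ((starRingEnd ℂ) μ).im then Complex.I else -Complex.I) = cμ := by
      rw [hc]
      rcases him.lt_or_gt with hlt | hgt
      · rw [if_pos (by simp; linarith), if_neg (by linarith)]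
        simp [Complex.conj_I]
      · rw [if_neg (by simp; linarith), if_pos hgt]
        simp [Complex.conj_I]
    have hd2 : p.map (starRingEnd ℂ) - C cμ
        = (X - C μ) ^ n * (d2'.map (starRingEnd ℂ)) := by
      have hmap := congrArg (Polynomial.map (starRingEnd ℂ)) hd2'
      simp only [Polynomial.map_sub, Polynomial.map_mul, Polynomial.map_pow,
        Polynomial.map_C, Polynomial.map_X, Complex.conj_conj, hconjc] at hmap
      exact hmap
    refine ⟨C (2⁻¹ : ℂ) * (d1 + d2'.map (starRingEnd ℂ)), ?_⟩
    have h2' : C (2⁻¹ : ℂ) * C cμ + C (2⁻¹ : ℂ) * C cμ = C cμ := by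
      rw [← C_mul, ← C_add]
      congr 1
      ring
    rw [hq]
    linear_combination C (2⁻¹ : ℂ) * hd1 + C (2⁻¹ : ℂ) * hd2 + h2'
  have hq2 : ∀ μ : ℂ, A.HasEigenvalue μ → (X - C μ) ^ n ∣ q * q + 1 := by
    intro μ hμ
    have hμR := (hmemR μ).mp hμ
    obtain ⟨d, hd⟩ := hqdvd μ hμR
    set cμ : ℂ := if 0 < μ.im then Complex.I else -Complex.I with hc
    have hCC : C cμ * C cμ = (-1 : ℂ[X]) := by
      rw [← C_mul]
      have : cμ * cμ = -1 := by
        rw [hc]; split_ifs <;> simp [Complex.I_mul_I]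
      rw [this]
      simp
    refine ⟨(q + C cμ) * d, ?_⟩
    linear_combination (q + C cμ) * hd + hCC
  -- define B and J
  set B : Module.End ℂ (ℂ ⊗[ℝ] V) := aeval A q with hB
  have hBsig : ∀ z, sig (B z) = B (sig z) := by
    intro z
    rw [hB, hA, sig_aeval L q z, hqconj]
  obtain ⟨J, hJB⟩ : ∃ J : V →ₗ[ℝ] V, LinearMap.baseChange ℂ J = B :=
    ⟨_, descend B hBsig⟩
  -- property 1
  have hB2 : B * B + 1 = 0 := by
    have hz := aeval_eq_zero_of_dvd A (q * q + 1) (by rw [hfr]; exact hq2)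
    rwa [map_add, map_mul, map_one, ← hB] at hz
  have h1 : J ∘ₗ J = -LinearMap.id := by
    apply baseChange_inj
    rw [LinearMap.baseChange_comp, hJB, LinearMap.baseChange_neg, LinearMap.baseChange_id]
    have : B * B = -1 := eq_neg_of_add_eq_zero_left hB2
    rw [← Module.End.mul_eq_comp, this, Module.End.one_eq_id]
  -- property 2
  have h2 : J ∘ₗ L = L ∘ₗ J := by
    have hcomm : B * A = A * B := by
      have hx : aeval A q * aeval A (X : ℂ[X]) = aeval A (X : ℂ[X]) * aeval A q := by
        rw [← map_mul, ← map_mul, mul_comm]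
      rwa [aeval_X, ← hB] at hx
    apply baseChange_inj
    rw [LinearMap.baseChange_comp, LinearMap.baseChange_comp, hJB]
    show B ∘ₗ A = A ∘ₗ B
    rw [← Module.End.mul_eq_comp, ← Module.End.mul_eq_comp, hcomm]
  -- helper: kernels at non-eigenvalues are trivial
  have hvzero : ∀ (μ : ℂ), ¬ A.HasEigenvalue μ → ∀ v : ℂ ⊗[ℝ] V,
      v ∈ LinearMap.ker ((A - μ • LinearMap.id) ^ n) → v = 0 := by
    intro μ hμ v hv
    by_contra hne
    apply hμ
    apply Module.End.hasEigenvalue_of_hasGenEigenvalue (k := n)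
    show A.genEigenspace μ n ≠ ⊥
    rw [Module.End.genEigenspace_nat]
    refine (Submodule.ne_bot_iff _).mpr ⟨v, ?_, hne⟩
    rwa [Module.End.one_eq_id]
  -- property 3
  have h3 : ∀ μ : ℂ, 0 < μ.im →
      LinearMap.ker ((A - μ • LinearMap.id) ^ n)
        ≤ LinearMap.ker (LinearMap.baseChange ℂ J - Complex.I • LinearMap.id) := by
    intro μ hμpos v hv
    by_cases hμR : μ ∈ R
    · obtain ⟨d, hd⟩ := hqdvd μ hμR
      rw [if_pos hμpos] at hd
      rw [LinearMap.mem_ker]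
      have hJI : LinearMap.baseChange ℂ J - Complex.I • LinearMap.id
          = aeval A (q - C Complex.I) := by
        rw [map_sub, hJB, hB, aeval_C, Module.algebraMap_end_eq_smul_id]
      have hXC : aeval A ((X - C μ) ^ n) = (A - μ • LinearMap.id) ^ n := by
        rw [map_pow, map_sub, aeval_X, aeval_C, Module.algebraMap_end_eq_smul_id]
      rw [hJI, hd, mul_comm, map_mul, Module.End.mul_apply, hXC,
        LinearMap.mem_ker.mp hv, map_zero]
    · have hv0 : v = 0 := hvzero μ (fun h => hμR ((hmemR μ).mp h)) v hv
      rw [hv0]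
      exact (LinearMap.ker _).zero_mem
  -- the uniqueness claim
  have claim : ∀ J'' : V →ₗ[ℝ] V,
      (∀ μ : ℂ, 0 < μ.im →
        LinearMap.ker ((A - μ • LinearMap.id) ^ n)
          ≤ LinearMap.ker (LinearMap.baseChange ℂ J'' - Complex.I • LinearMap.id)) →
      ∀ (μ : ℂ) (v : ℂ ⊗[ℝ] V), v ∈ LinearMap.ker ((A - μ • LinearMap.id) ^ n) →
        LinearMap.baseChange ℂ J'' v
          = (if 0 < μ.im then Complex.I else -Complex.I) • v := by
    intro J'' h3'' μ v hv
    rcases lt_trichotomy 0 μ.im with hpos | hzero | hneg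
    · rw [if_pos hpos]
      have hmem := h3'' μ hpos hv
      rw [LinearMap.mem_ker, LinearMap.sub_apply, LinearMap.smul_apply, LinearMap.id_apply,
        sub_eq_zero] at hmem
      exact hmem
    · have hv0 : v = 0 := hvzero μ (fun h => hnotreal μ h hzero.symm) v hv
      rw [hv0]
      simp
    · rw [if_neg (by linarith)]
      have hσv : sig v ∈ LinearMap.ker ((A - (starRingEnd ℂ) μ • LinearMap.id) ^ n) := by
        rw [LinearMap.mem_ker, hA, ← sig_sub_pow L μ n v, ← hA,
          LinearMap.mem_ker.mp hv, map_zero]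
      have hconjpos : 0 < ((starRingEnd ℂ) μ).im := by
        simp only [Complex.conj_im]
        linarith
      have hmem := h3'' _ hconjpos hσv
      rw [LinearMap.mem_ker, LinearMap.sub_apply, LinearMap.smul_apply, LinearMap.id_apply,
        sub_eq_zero] at hmem
      calc LinearMap.baseChange ℂ J'' v
          = LinearMap.baseChange ℂ J'' (sig (sig v)) := by rw [sig_sig]
        _ = sig (LinearMap.baseChange ℂ J'' (sig v)) := (sig_baseChange J'' (sig v)).symm
        _ = sig (Complex.I • sig v) := by rw [hmem]
        _ = -Complex.I • v := by rw [sig_smul, sig_sig]; simp [Complex.conj_I]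
  refine ⟨J, ⟨h1, h2, h3⟩, ?_⟩
  rintro J' ⟨-, -, h3'⟩
  apply baseChange_inj
  apply LinearMap.ext
  intro z
  have hz : z ∈ (⊤ : Submodule ℂ (ℂ ⊗[ℝ] V)) := trivial
  rw [← Module.End.iSup_maxGenEigenspace_eq_top A] at hz
  refine Submodule.iSup_induction _ (motive := fun w => LinearMap.baseChange ℂ J' w
      = LinearMap.baseChange ℂ J w) hz (fun μ x hx => ?_) (by simp)
    (fun x y hx hy => by
      rw [map_add, map_add, hx, hy])
  have hx' : x ∈ LinearMap.ker ((A - μ • LinearMap.id) ^ n) := by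
    rw [Module.End.maxGenEigenspace_eq_genEigenspace_finrank, hfr,
      Module.End.genEigenspace_nat] at hx
    rwa [Module.End.one_eq_id] at hx
  rw [claim J' h3' μ x hx', claim J h3 μ x hx']
end

section
/- Selfadjointness of the canonical complex structure. Let V be a finite-dimensional real vector space, g a nondegenerate symmetric bilinear form on V, and L : V → V a g-selfadjoint linear map (g(Lv, w) = g(v, Lw) for all v, w) with no real eigenvalues. Let J : V → V be the unique linear map with J∘J = −id_V, J∘L = L∘J, and such that for every μ ∈ ℂ with Im μ > 0 the generalized eigenspace of the complexification L_ℂ for μ is contained in ker(J_ℂ − i·id). Then J is g-selfadjoint as well: g(Ju, v) = g(u, Jv) for all u, v ∈ V. -/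
open TensorProduct

namespace CanonicalComplexStructureAux

open LinearMap

variable {V : Type*} [AddCommGroup V] [Module ℝ V]

/-- Conjugation on the complexification `ℂ ⊗[ℝ] V`. -/
noncomputable def conjMap (V : Type*) [AddCommGroup V] [Module ℝ V] :
    ℂ ⊗[ℝ] V →ₗ[ℝ] ℂ ⊗[ℝ] V :=
  TensorProduct.map Complex.conjAe.toLinearMap LinearMap.id

lemma conjMap_tmul (c : ℂ) (v : V) :
    conjMap V (c ⊗ₜ[ℝ] v) = (starRingEnd ℂ) c ⊗ₜ[ℝ] v := rfl

lemma conjMap_conjMap (x : ℂ ⊗[ℝ] V) : conjMap V (conjMap V x) = x := by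
  induction x using TensorProduct.induction_on with
  | zero => simp
  | tmul c v => simp [conjMap_tmul]
  | add a b ha hb => rw [map_add, map_add, ha, hb]

lemma conjMap_smul (c : ℂ) (x : ℂ ⊗[ℝ] V) :
    conjMap V (c • x) = (starRingEnd ℂ) c • conjMap V x := by
  induction x using TensorProduct.induction_on with
  | zero => simp
  | tmul a v =>
      rw [smul_tmul', conjMap_tmul, conjMap_tmul, smul_tmul', smul_eq_mul, smul_eq_mul, map_mul]
  | add a b ha hb => rw [smul_add, map_add, ha, hb, map_add, smul_add]

lemma conjMap_baseChange (A : V →ₗ[ℝ] V) (x : ℂ ⊗[ℝ] V) :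
    conjMap V (baseChange ℂ A x) = baseChange ℂ A (conjMap V x) := by
  induction x using TensorProduct.induction_on with
  | zero => simp
  | tmul c v => rw [baseChange_tmul, conjMap_tmul, conjMap_tmul, baseChange_tmul]
  | add a b ha hb => simp only [map_add, ha, hb]

lemma conjMap_pow_shift (L : V →ₗ[ℝ] V) (ν : ℂ) (k : ℕ) (y : ℂ ⊗[ℝ] V) :
    conjMap V (((baseChange ℂ L - ν • 1) ^ k) y)
      = ((baseChange ℂ L - (starRingEnd ℂ) ν • 1) ^ k) (conjMap V y) := by
  induction k generalizing y with
  | zero => simp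
  | succ k ih =>
      rw [pow_succ, pow_succ, Module.End.mul_apply, Module.End.mul_apply, ih]
      congr 1
      rw [LinearMap.sub_apply, LinearMap.sub_apply, LinearMap.smul_apply, LinearMap.smul_apply,
        Module.End.one_apply, Module.End.one_apply, map_sub, conjMap_baseChange, conjMap_smul]

end CanonicalComplexStructureAux

open CanonicalComplexStructureAux LinearMap

set_option maxHeartbeats 1000000

/-- the canonical complex structure `J` associated with a
`g`-selfadjoint operator `L` without real eigenvalues is itself `g`-selfadjoint. -/
theorem canonical_complex_structure_selfadjoint
    (V : Type*) [AddCommGroup V] [Module ℝ V] [FiniteDimensional ℝ V]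
    (g : V →ₗ[ℝ] V →ₗ[ℝ] ℝ)
    (hsymm : ∀ v w : V, g v w = g w v)
    (hnd : ∀ v : V, (∀ w : V, g v w = 0) → v = 0)
    (L : V →ₗ[ℝ] V)
    (hsa : ∀ v w : V, g (L v) w = g v (L w))
    (hnoreal : ∀ μ : ℝ, LinearMap.ker (L - μ • LinearMap.id) = ⊥)
    (J : V →ₗ[ℝ] V)
    (hJ2 : J ∘ₗ J = -LinearMap.id)
    (hJL : J ∘ₗ L = L ∘ₗ J)
    (hJeig : ∀ μ : ℂ, 0 < μ.im →
      LinearMap.ker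
        ((LinearMap.baseChange ℂ L - μ • LinearMap.id :
            Module.End ℂ (ℂ ⊗[ℝ] V)) ^ Module.finrank ℝ V)
        ≤ LinearMap.ker
          (LinearMap.baseChange ℂ J - Complex.I • LinearMap.id :
            Module.End ℂ (ℂ ⊗[ℝ] V))) :
    ∀ u v : V, g (J u) v = g u (J v) := by
  classical
  set n := Module.finrank ℝ V with hn
  set Lc : Module.End ℂ (ℂ ⊗[ℝ] V) := LinearMap.baseChange ℂ L with hLc_def
  set Jc : Module.End ℂ (ℂ ⊗[ℝ] V) := LinearMap.baseChange ℂ J with hJc_def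
  set gc := LinearMap.BilinForm.baseChange ℂ g with hgc_def
  -- `Lc` is selfadjoint with respect to `gc`
  have hLsa : ∀ x y : ℂ ⊗[ℝ] V, gc (Lc x) y = gc x (Lc y) := by
    intro x y
    induction x using TensorProduct.induction_on with
    | zero => simp
    | add a b ha hb => simp [map_add, ha, hb]
    | tmul a w =>
        induction y using TensorProduct.induction_on with
        | zero => simp
        | add c d hc hd => simp [map_add, hc, hd]
        | tmul b w' =>
            rw [hLc_def, LinearMap.baseChange_tmul, hgc_def,
              LinearMap.BilinForm.baseChange_tmul, LinearMap.baseChange_tmul,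
              LinearMap.BilinForm.baseChange_tmul, hsa]
  -- orthogonality of generalized eigenspaces for distinct eigenvalues
  have horth : ∀ N (μ ν : ℂ), μ ≠ ν → ∀ (j k : ℕ), j + k ≤ N → ∀ x y : ℂ ⊗[ℝ] V,
      ((Lc - μ • 1) ^ j) x = 0 → ((Lc - ν • 1) ^ k) y = 0 → gc x y = 0 := by
    intro N
    induction N with
    | zero =>
        intro μ ν hμν j k hjk x y hx hy
        obtain ⟨rfl, rfl⟩ : j = 0 ∧ k = 0 := by omega
        simp only [pow_zero, Module.End.one_apply] at hx
        simp [hx]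
    | succ N ih =>
        intro μ ν hμν j k hjk x y hx hy
        cases j with
        | zero =>
            simp only [pow_zero, Module.End.one_apply] at hx
            simp [hx]
        | succ j =>
            cases k with
            | zero =>
                simp only [pow_zero, Module.End.one_apply] at hy
                simp [hy]
            | succ k =>
                have hx' : ((Lc - μ • 1) ^ j) ((Lc - μ • 1) x) = 0 := by
                  rw [← Module.End.mul_apply, ← pow_succ]; exact hx
                have hy' : ((Lc - ν • 1) ^ k) ((Lc - ν • 1) y) = 0 := by
                  rw [← Module.End.mul_apply, ← pow_succ]; exact hy
                have h1 : gc ((Lc - μ • 1) x) y = 0 := ih μ ν hμν j (k + 1) (by omega) _ _ hx' hy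
                have h2 : gc x ((Lc - ν • 1) y) = 0 := ih μ ν hμν (j + 1) k (by omega) _ _ hx hy'
                have e1 : gc (Lc x) y - μ * gc x y = 0 := by
                  have : gc ((Lc x) - μ • x) y = 0 := by
                    simpa only [LinearMap.sub_apply, LinearMap.smul_apply,
                      Module.End.one_apply] using h1
                  simpa only [map_sub, map_smul, LinearMap.sub_apply, LinearMap.smul_apply,
                    smul_eq_mul] using this
                have e2 : gc x (Lc y) - ν * gc x y = 0 := by
                  have : gc x ((Lc y) - ν • y) = 0 := by
                    simpa only [LinearMap.sub_apply, LinearMap.smul_apply,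
                      Module.End.one_apply] using h2
                  simpa only [map_sub, map_smul, smul_eq_mul] using this
                have e3 : (ν - μ) * gc x y = 0 := by
                  have e0 : gc (Lc x) y = gc x (Lc y) := hLsa x y
                  linear_combination e1 - e2 - e0
                rcases mul_eq_zero.mp e3 with h | h
                · exact absurd (sub_eq_zero.mp h).symm hμν
                · exact h
  -- `Jc` commutes with `Lc` and hence preserves generalized eigenspaces
  have hcomm : Lc * Jc = Jc * Lc := by
    have h1 : Lc * Jc = LinearMap.baseChange ℂ (L ∘ₗ J) := by
      rw [hLc_def, hJc_def]
      ext w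
      simp [Module.End.mul_apply, LinearMap.baseChange_tmul]
    have h2 : Jc * Lc = LinearMap.baseChange ℂ (J ∘ₗ L) := by
      rw [hLc_def, hJc_def]
      ext w
      simp [Module.End.mul_apply, LinearMap.baseChange_tmul]
    rw [h1, h2, hJL]
  have hJker : ∀ (μ : ℂ) (k : ℕ) (x : ℂ ⊗[ℝ] V),
      ((Lc - μ • 1) ^ k) x = 0 → ((Lc - μ • 1) ^ k) (Jc x) = 0 := by
    intro μ k x hx
    have hc1 : (Lc - μ • 1) * Jc = Jc * (Lc - μ • 1) :=
      Commute.sub_left hcomm ((Commute.one_left Jc).smul_left μ)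
    have hc : ((Lc - μ • 1) ^ k) * Jc = Jc * ((Lc - μ • 1) ^ k) :=
      (Commute.pow_left hc1 k)
    have := congrArg (fun f : Module.End ℂ (ℂ ⊗[ℝ] V) => f x) hc
    simp only [Module.End.mul_apply] at this
    rw [this, hx, map_zero]
  -- `Lc` has no real generalized eigenvectors
  have hreal : ∀ (r : ℝ) (k : ℕ) (x : ℂ ⊗[ℝ] V), ((Lc - (r : ℂ) • 1) ^ k) x = 0 → x = 0 := by
    intro r
    have hinj0 : Function.Injective ⇑(L - r • LinearMap.id : V →ₗ[ℝ] V) := by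
      exact LinearMap.ker_eq_bot.mp (hnoreal r)
    have hbcinj : Function.Injective ⇑(LinearMap.baseChange ℂ (L - r • LinearMap.id : V →ₗ[ℝ] V)) := by
      rw [LinearMap.baseChange_eq_ltensor]
      exact Module.Flat.lTensor_preserves_injective_linearMap _ hinj0
    have hbc : ∀ z : ℂ ⊗[ℝ] V,
        (Lc - (r : ℂ) • 1) z = LinearMap.baseChange ℂ (L - r • LinearMap.id) z := by
      intro z
      induction z using TensorProduct.induction_on with
      | zero => rw [map_zero, map_zero]
      | tmul c v =>
          rw [LinearMap.sub_apply, LinearMap.smul_apply, Module.End.one_apply, hLc_def,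
            LinearMap.baseChange_tmul, LinearMap.baseChange_tmul]
          rw [LinearMap.sub_apply, LinearMap.smul_apply, LinearMap.id_apply, tmul_sub, tmul_smul]
          rw [show ((r : ℂ)) = algebraMap ℝ ℂ r from rfl, algebraMap_smul]
      | add a b ha hb => simp only [map_add, ha, hb]
    have hinj : Function.Injective ⇑(Lc - (r : ℂ) • 1) := by
      intro a b hab
      apply hbcinj
      rw [← hbc, ← hbc, hab]
    intro k
    induction k with
    | zero =>
        intro x hx
        rw [pow_zero, Module.End.one_apply] at hx
        exact hx
    | succ k ih =>
        intro x hx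
        rw [pow_succ, Module.End.mul_apply] at hx
        have h0 : (Lc - (r : ℂ) • 1) x = 0 := ih _ hx
        exact hinj (by rw [h0, map_zero])
  -- `Jc` acts as `i` on generalized eigenspaces with positive imaginary part
  have hJpos : ∀ μ : ℂ, 0 < μ.im → ∀ x : ℂ ⊗[ℝ] V,
      ((Lc - μ • 1) ^ n) x = 0 → Jc x = Complex.I • x := by
    intro μ hμ x hx
    have hmem : x ∈ LinearMap.ker
        ((LinearMap.baseChange ℂ L - μ • LinearMap.id :
          Module.End ℂ (ℂ ⊗[ℝ] V)) ^ Module.finrank ℝ V) := by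
      rw [LinearMap.mem_ker]
      exact hx
    have h := hJeig μ hμ hmem
    rw [LinearMap.mem_ker, LinearMap.sub_apply, LinearMap.smul_apply, LinearMap.id_apply,
      sub_eq_zero] at h
    exact h
  -- `Jc` acts as `-i` on generalized eigenspaces with negative imaginary part
  have hJneg : ∀ μ : ℂ, μ.im < 0 → ∀ x : ℂ ⊗[ℝ] V,
      ((Lc - μ • 1) ^ n) x = 0 → Jc x = -(Complex.I • x) := by
    intro μ hμ x hx
    have hσx : ((Lc - (starRingEnd ℂ) μ • 1) ^ n) (conjMap V x) = 0 := by
      rw [hLc_def, ← conjMap_pow_shift, ← hLc_def, hx, map_zero]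
    have him : 0 < ((starRingEnd ℂ) μ).im := by
      rw [Complex.conj_im]
      exact neg_pos.mpr hμ
    have h1 : Jc (conjMap V x) = Complex.I • conjMap V x := hJpos _ him _ hσx
    have h2 : conjMap V (Jc (conjMap V x)) = Jc x := by
      rw [hJc_def, conjMap_baseChange, conjMap_conjMap]
    rw [h1, conjMap_smul, conjMap_conjMap, Complex.conj_I, neg_smul] at h2
    exact h2.symm
  -- membership in maximal generalized eigenspaces
  have hfr : Module.finrank ℂ (ℂ ⊗[ℝ] V) = n := Module.finrank_baseChange
  have hE : ∀ (μ : ℂ) (x : ℂ ⊗[ℝ] V), x ∈ Module.End.maxGenEigenspace Lc μ →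
      ((Lc - μ • 1) ^ n) x = 0 := by
    intro μ x hx
    rw [Module.End.maxGenEigenspace_eq_genEigenspace_finrank, hfr,
      Module.End.genEigenspace_nat, LinearMap.mem_ker] at hx
    exact hx
  -- main claim on the complexification
  have htop := Module.End.iSup_maxGenEigenspace_eq_top (K := ℂ) Lc
  have main : ∀ x y : ℂ ⊗[ℝ] V, gc (Jc x) y = gc x (Jc y) := by
    intro x
    have hx : x ∈ ⨆ μ : ℂ, Module.End.maxGenEigenspace Lc μ := htop ▸ Submodule.mem_top
    refine Submodule.iSup_induction (motive := fun x => ∀ y, gc (Jc x) y = gc x (Jc y)) _ hx ?_ ?_ ?_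
    · intro μ x hxμ y
      have hxk : ((Lc - μ • 1) ^ n) x = 0 := hE μ x hxμ
      have hy : y ∈ ⨆ ν : ℂ, Module.End.maxGenEigenspace Lc ν := htop ▸ Submodule.mem_top
      refine Submodule.iSup_induction (motive := fun y => gc (Jc x) y = gc x (Jc y)) _ hy ?_ ?_ ?_
      · intro ν y hyν
        have hyk : ((Lc - ν • 1) ^ n) y = 0 := hE ν y hyν
        by_cases hμν : μ = ν
        · subst hμν
          rcases lt_trichotomy μ.im 0 with him | him | him
          · rw [hJneg μ him x hxk, hJneg μ him y hyk]
            simp only [map_neg, map_smul, LinearMap.neg_apply, LinearMap.smul_apply,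
              smul_eq_mul]
          · have hμr : μ = ((μ.re : ℝ) : ℂ) := by
              apply Complex.ext <;> simp [him]
            have hx0 : x = 0 := hreal μ.re n x (by rw [← hμr]; exact hxk)
            simp [hx0]
          · rw [hJpos μ him x hxk, hJpos μ him y hyk]
            simp only [map_smul, LinearMap.smul_apply, smul_eq_mul]
        · have h1 : gc (Jc x) y = 0 :=
            horth (n + n) μ ν hμν n n le_rfl _ _ (hJker μ n x hxk) hyk
          have h2 : gc x (Jc y) = 0 :=
            horth (n + n) μ ν hμν n n le_rfl _ _ hxk (hJker ν n y hyk)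
          rw [h1, h2]
      · simp
      · intro a b ha hb
        simp only [map_add, ha, hb]
    · intro y
      simp
    · intro a b ha hb y
      simp only [map_add, LinearMap.add_apply, ha y, hb y]
  -- descend to the real vector space
  intro u v
  have hfinal := main ((1 : ℂ) ⊗ₜ[ℝ] u) ((1 : ℂ) ⊗ₜ[ℝ] v)
  rw [hJc_def, LinearMap.baseChange_tmul, LinearMap.baseChange_tmul, hgc_def,
    LinearMap.BilinForm.baseChange_tmul, LinearMap.BilinForm.baseChange_tmul] at hfinal
  simp only [mul_one, Complex.real_smul, Complex.ofReal_inj] at hfinal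
  simpa using hfinal
end

section
/- Convergence of polynomial functional calculus under uniform approximation near the spectrum. Let K ⊆ ℂ be compact and let L ∈ Mat_n(ℝ) be such that every complex eigenvalue of L lies in the interior of K. Let (P_i) be a sequence of polynomials with real coefficients that converges uniformly on K (as functions K → ℂ) to a function f : K → ℂ. Then the sequence of matrices (P_i(L)) converges in Mat_n(ℝ); the limit depends only on f, in the sense that if (Q_i) is another sequence of real polynomials converging uniformly to f on K, then lim_i P_i(L) = lim_i Q_i(L); and the set of complex eigenvalues of the limit matrix equals { f(μ) : μ a complex eigenvalue of L }. -/
open Matrix Polynomial Filter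

lemma multiset_prod_swap {α β γ : Type*} [CommMonoid γ] (s : Multiset α) (t : Multiset β)
    (g : α → β → γ) :
    (s.map (fun a => (t.map (g a)).prod)).prod = (t.map (fun b => (s.map (g · b)).prod)).prod := by
  induction s using Multiset.induction_on with
  | empty => simp
  | cons a s ih => simp [Multiset.prod_map_mul, ih]

lemma eval_charpoly_mat {n : ℕ} (A : Matrix (Fin n) (Fin n) ℂ) (μ : ℂ) :
    A.charpoly.eval μ = (algebraMap ℂ (Matrix (Fin n) (Fin n) ℂ) μ - A).det := by
  rw [Matrix.charpoly, ← coe_evalRingHom, RingHom.map_det]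
  congr 1
  ext i j
  by_cases h : i = j
  · subst h
    simp [charmatrix_apply_eq, Matrix.algebraMap_matrix_apply]
  · simp [charmatrix_apply_ne _ _ _ h, Matrix.algebraMap_matrix_apply, h]

lemma card_roots_charpoly {n : ℕ} (A : Matrix (Fin n) (Fin n) ℂ) :
    Multiset.card A.charpoly.roots = n := by
  rw [splits_iff_card_roots.mp (IsAlgClosed.splits A.charpoly)]
  simp [Matrix.charpoly_natDegree_eq_dim]

/-- eval of charpoly as product over its roots -/
lemma eval_charpoly_roots {n : ℕ} (A : Matrix (Fin n) (Fin n) ℂ) (μ : ℂ) :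
    A.charpoly.eval μ = (A.charpoly.roots.map (fun l => μ - l)).prod := by
  conv_lhs => rw [(IsAlgClosed.splits A.charpoly).eq_prod_roots_of_monic A.charpoly_monic]
  rw [eval_multiset_prod, Multiset.map_map]
  simp

/-- Key lemma: determinant of polynomial functional calculus. -/
lemma det_aeval_eq_prod {n : ℕ} (A : Matrix (Fin n) (Fin n) ℂ) (Q : ℂ[X]) :
    (Polynomial.aeval A Q).det = (A.charpoly.roots.map (fun l => Q.eval l)).prod := by
  rcases eq_or_ne Q 0 with rfl | hQ
  · rcases Nat.eq_zero_or_pos n with hn | hn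
    · subst hn
      have : A.charpoly.roots = 0 := by
        have := card_roots_charpoly A; simpa using this
      simp [this, Matrix.det_fin_zero]
    · have : Nonempty (Fin n) := ⟨⟨0, hn⟩⟩
      have hroots : A.charpoly.roots ≠ 0 := by
        intro h
        have := card_roots_charpoly A
        rw [h] at this
        simp at this
        omega
      obtain ⟨l, hl⟩ := Multiset.exists_mem_of_ne_zero hroots
      rw [map_zero, Matrix.det_zero]
      symm
      apply Multiset.prod_eq_zero
      refine Multiset.mem_map.mpr ⟨l, hl, by simp⟩
  · -- factor Q
    have hsp : Q.Splits := IsAlgClosed.splits Q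
    have hfac := hsp.eq_prod_roots
    set c := Q.leadingCoeff with hc
    set r : List ℂ := Q.roots.toList with hr
    have hrr : (r : Multiset ℂ) = Q.roots := Multiset.coe_toList _
    have hfac' : Q = C c * (r.map (fun a => X - C a)).prod := by
      conv_lhs => rw [hfac, ← hrr]
      rw [Multiset.map_coe, Multiset.prod_coe]
    have hdet1 : (Polynomial.aeval A Q).det
        = c ^ n * ((Q.roots.map (fun m => (A - algebraMap ℂ (Matrix (Fin n) (Fin n) ℂ) m).det)).prod) := by
      conv_lhs => rw [hfac']
      rw [_root_.map_mul, aeval_C, map_list_prod, List.map_map, det_mul, ← Matrix.coe_detMonoidHom,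
        map_list_prod, List.map_map]
      congr 1
      · rw [Matrix.coe_detMonoidHom, Algebra.algebraMap_eq_smul_one, det_smul, det_one, mul_one,
          Fintype.card_fin]
      · have hfun : (⇑Matrix.detMonoidHom ∘ ⇑(aeval A) ∘ fun a => X - C a)
            = fun m : ℂ => (A - algebraMap ℂ (Matrix (Fin n) (Fin n) ℂ) m).det := by
          funext m
          simp [Matrix.coe_detMonoidHom, Function.comp, map_sub]
        rw [hfun, ← hrr, Multiset.map_coe, Multiset.prod_coe]
        simp [Matrix.coe_detMonoidHom]
    have hfactor : ∀ m : ℂ, (A - algebraMap ℂ (Matrix (Fin n) (Fin n) ℂ) m).det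
        = (A.charpoly.roots.map (fun l => l - m)).prod := by
      intro m
      have h2 : (A.charpoly.roots.map (fun l => l - m))
          = (A.charpoly.roots.map (fun l => m - l)).map Neg.neg := by
        rw [Multiset.map_map]
        apply Multiset.map_congr rfl
        intro l _
        simp
      rw [show A - algebraMap ℂ (Matrix (Fin n) (Fin n) ℂ) m
            = -(algebraMap ℂ (Matrix (Fin n) (Fin n) ℂ) m - A) from (neg_sub _ _).symm,
        det_neg, ← eval_charpoly_mat, eval_charpoly_roots, h2, Multiset.prod_map_neg,
        Multiset.card_map, card_roots_charpoly, Fintype.card_fin]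
    simp_rw [hdet1, hfactor]
    rw [multiset_prod_swap]
    have hcn : c ^ n = (A.charpoly.roots.map (fun _ => c)).prod := by
      rw [Multiset.map_const', Multiset.prod_replicate, card_roots_charpoly]
    rw [hcn, ← Multiset.prod_map_mul]
    congr 1
    apply Multiset.map_congr rfl
    intro l _
    conv_rhs => rw [hfac]
    rw [eval_mul, eval_C, eval_multiset_prod, Multiset.map_map]
    congr 1
    congr 1
    apply Multiset.map_congr rfl
    intro m _
    simp

lemma spectrum_eq_roots {n : ℕ} (A : Matrix (Fin n) (Fin n) ℂ) :
    spectrum ℂ A = {μ | μ ∈ A.charpoly.roots} := by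
  ext μ
  rw [spectrum.mem_iff, Matrix.isUnit_iff_isUnit_det, isUnit_iff_ne_zero, not_not,
    ← eval_charpoly_mat]
  simp only [Set.mem_setOf_eq, mem_roots (A.charpoly_monic.ne_zero), IsRoot.def]

lemma iterate_deriv_aeval (q : Polynomial ℝ) (k : ℕ) :
    deriv^[k] (fun z : ℂ => Polynomial.aeval z q)
      = fun z => Polynomial.aeval z (Polynomial.derivative^[k] q) := by
  induction k with
  | zero => simp
  | succ k ih =>
      rw [Function.iterate_succ_apply', ih, Function.iterate_succ_apply']
      funext z
      exact Polynomial.deriv_aeval _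

lemma jets_converge {K : Set ℂ} (Q : ℕ → Polynomial ℝ) (f : ℂ → ℂ)
    (hconv : TendstoUniformlyOn (fun i (z : ℂ) => Polynomial.aeval z (Q i)) f atTop K) (k : ℕ) :
    TendstoLocallyUniformlyOn (fun i z => Polynomial.aeval z (Polynomial.derivative^[k] (Q i)))
      (deriv^[k] f) atTop (interior K) := by
  induction k with
  | zero => simpa using hconv.tendstoLocallyUniformlyOn.mono interior_subset
  | succ k ih =>
      have h2 := ih.deriv (F := fun i z => Polynomial.aeval z (Polynomial.derivative^[k] (Q i)))
        (Filter.Eventually.of_forall fun i =>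
          (Polynomial.differentiable_aeval _).differentiableOn) isOpen_interior
      have e1 : (deriv ∘ fun i z => Polynomial.aeval z (Polynomial.derivative^[k] (Q i)))
          = fun i (z : ℂ) => Polynomial.aeval z (Polynomial.derivative^[k + 1] (Q i)) := by
        funext i z
        simp only [Function.comp]
        rw [Polynomial.deriv_aeval, Function.iterate_succ_apply' (⇑Polynomial.derivative) k (Q i)]
      have e2 : deriv (deriv^[k] f) = deriv^[k + 1] f :=
        (Function.iterate_succ_apply' deriv k f).symm
      rwa [e1, e2] at h2


/-- convergence of the polynomial functional calculus under uniform
approximation near the spectrum, independence of the limit from the approximating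
sequence, and the spectral mapping property of the limit. -/
theorem polynomial_functional_calculus_convergence
    (n : ℕ) (K : Set ℂ) (hK : IsCompact K)
    (L : Matrix (Fin n) (Fin n) ℝ)
    (hspec : spectrum ℂ (L.map (algebraMap ℝ ℂ)) ⊆ interior K)
    (P : ℕ → Polynomial ℝ) (f : ℂ → ℂ)
    (hconv : TendstoUniformlyOn (fun i (z : ℂ) => Polynomial.aeval z (P i)) f atTop K) :
    ∃ M : Matrix (Fin n) (Fin n) ℝ,
      Tendsto (fun i => Polynomial.aeval L (P i)) atTop (nhds M) ∧
      (∀ Q : ℕ → Polynomial ℝ,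
        TendstoUniformlyOn (fun i (z : ℂ) => Polynomial.aeval z (Q i)) f atTop K →
        Tendsto (fun i => Polynomial.aeval L (Q i)) atTop (nhds M)) ∧
      spectrum ℂ (M.map (algebraMap ℝ ℂ)) = f '' spectrum ℂ (L.map (algebraMap ℝ ℂ)) := by
  classical
  set ι := algebraMap ℝ ℂ with hι
  set Lc := L.map ι with hLc
  set χ := Lc.charpoly with hχ
  have hχmap : χ = (L.charpoly).map ι := Matrix.charpoly_map L ι
  have hspecroots : spectrum ℂ Lc = {μ | μ ∈ χ.roots} := spectrum_eq_roots Lc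
  set S := χ.roots.toFinset with hS
  have hrootsK : ∀ l ∈ χ.roots, l ∈ interior K := by
    intro l hl
    exact hspec (by rw [hspecroots]; exact hl)
  -- the jet map
  set jmap : Polynomial ℝ →ₗ[ℝ] (({x // x ∈ S} × Fin n) → ℂ) :=
    LinearMap.pi (fun p => (Polynomial.aeval (R := ℝ) (p.1 : ℂ)).toLinearMap ∘ₗ
      ((Polynomial.derivative (R := ℝ) ^ (p.2 : ℕ) : Module.End ℝ (Polynomial ℝ)))) with hjdef
  have hjmap : ∀ (R : Polynomial ℝ) (p : {x // x ∈ S} × Fin n),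
      jmap R p = Polynomial.aeval (p.1 : ℂ) (Polynomial.derivative^[(p.2 : ℕ)] R) := by
    intro R p
    simp [hjdef, LinearMap.pi_apply, Module.End.pow_apply]
  -- kernel of jmap is contained in kernel of evaluation at L
  have hker : LinearMap.ker jmap ≤ LinearMap.ker (Polynomial.aeval L).toLinearMap := by
    intro R hR
    rw [LinearMap.mem_ker] at hR ⊢
    rcases eq_or_ne R 0 with rfl | hR0
    · simp
    have hRm0 : R.map ι ≠ 0 := Polynomial.map_ne_zero hR0
    have hle : χ.roots ≤ (R.map ι).roots := by
      rw [Multiset.le_iff_count]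
      intro l
      by_cases hl : l ∈ χ.roots
      · have hcount : χ.roots.count l ≤ n := by
          have := Multiset.count_le_card l χ.roots
          rwa [card_roots_charpoly Lc] at this
        rcases Nat.eq_zero_or_pos n with hn0 | hn0
        · omega
        refine hcount.trans ?_
        rw [Polynomial.count_roots]
        have hlt : n - 1 < (R.map ι).rootMultiplicity l := by
          rw [Polynomial.lt_rootMultiplicity_iff_isRoot_iterate_derivative_of_mem_nonZeroDivisors
            hRm0 (mem_nonZeroDivisors_of_ne_zero (by
              exact_mod_cast Nat.cast_ne_zero.mpr (Nat.factorial_ne_zero (n - 1))))]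
          intro m hm
          have hmem : l ∈ S := Multiset.mem_toFinset.mpr hl
          have hcomp := congrFun hR (⟨l, hmem⟩, ⟨m, by omega⟩)
          rw [hjmap] at hcomp
          simp only [Pi.zero_apply] at hcomp
          rw [Polynomial.IsRoot, Polynomial.iterate_derivative_map, Polynomial.eval_map,
            ← Polynomial.aeval_def]
          exact hcomp
        omega
      · simp [Multiset.count_eq_zero_of_notMem hl]
    have hdvd : χ ∣ R.map ι := by
      have h1 : (χ.roots.map (fun a => X - C a)).prod ∣ R.map ι :=
        (Multiset.prod_X_sub_C_dvd_iff_le_roots hRm0 χ.roots).mpr hle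
      rwa [← (IsAlgClosed.splits χ).eq_prod_roots_of_monic Lc.charpoly_monic] at h1
    rw [hχmap, Polynomial.map_dvd_map' ι] at hdvd
    obtain ⟨q, rfl⟩ := hdvd
    simp [_root_.map_mul, Matrix.aeval_self_charpoly]
  -- the factored linear map
  obtain ⟨W, hW⟩ := Submodule.exists_isCompl (LinearMap.range jmap)
  set prj := Submodule.linearProjOfIsCompl _ _ hW with hprj
  set Φ : (({x // x ∈ S} × Fin n) → ℂ) →ₗ[ℝ] Matrix (Fin n) (Fin n) ℝ :=
    ((((LinearMap.ker jmap).liftQ (Polynomial.aeval L).toLinearMap hker).comp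
      (jmap.quotKerEquivRange).symm.toLinearMap).comp prj) with hPhidef
  have hΦ : ∀ R : Polynomial ℝ, Φ (jmap R) = Polynomial.aeval L R := by
    intro R
    have h1 : prj (jmap R) = ⟨jmap R, LinearMap.mem_range_self _ R⟩ :=
      Submodule.linearProjOfIsCompl_apply_left hW ⟨jmap R, LinearMap.mem_range_self _ R⟩
    simp only [hPhidef, LinearMap.comp_apply, h1, LinearEquiv.coe_toLinearMap]
    rw [LinearMap.quotKerEquivRange_symm_apply_image, Submodule.mkQ_apply,
      Submodule.liftQ_apply, AlgHom.toLinearMap_apply]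
  have hΦc : Continuous Φ := Φ.continuous_of_finiteDimensional
  -- the limit jet vector
  set vlim : ({x // x ∈ S} × Fin n) → ℂ := fun p => deriv^[(p.2 : ℕ)] f (p.1 : ℂ) with hvlim
  -- jets of any uniformly convergent sequence converge to vlim
  have hjets : ∀ (Q : ℕ → Polynomial ℝ),
      TendstoUniformlyOn (fun i (z : ℂ) => Polynomial.aeval z (Q i)) f atTop K →
      Tendsto (fun i => jmap (Q i)) atTop (nhds vlim) := by
    intro Q hQ
    rw [tendsto_pi_nhds]
    intro p
    have hint : (p.1 : ℂ) ∈ interior K := by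
      apply hrootsK
      exact Multiset.mem_toFinset.mp p.1.2
    have h1 := (jets_converge Q f hQ (p.2 : ℕ)).tendsto_at hint
    simp only [hvlim]
    have e : (fun i => jmap (Q i) p)
        = fun i => Polynomial.aeval (p.1 : ℂ) (Polynomial.derivative^[(p.2 : ℕ)] (Q i)) := by
      funext i; rw [hjmap]
    rw [e]
    exact h1
  -- limit matrix
  set M := Φ vlim with hM
  have hlim : ∀ (Q : ℕ → Polynomial ℝ),
      TendstoUniformlyOn (fun i (z : ℂ) => Polynomial.aeval z (Q i)) f atTop K →
      Tendsto (fun i => Polynomial.aeval L (Q i)) atTop (nhds M) := by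
    intro Q hQ
    have := (hΦc.tendsto vlim).comp (hjets Q hQ)
    simp only [Function.comp_def, hΦ] at this
    exact this
  -- determinant identity for the limit
  have hmapaeval : ∀ R : Polynomial ℝ, (Polynomial.aeval L R).map ι
      = Polynomial.aeval Lc (R.map ι) := by
    intro R
    have h1 := Polynomial.aeval_algHom_apply ((Algebra.ofId ℝ ℂ).mapMatrix) L R
    simp only [AlgHom.mapMatrix_apply] at h1
    rw [Polynomial.aeval_map_algebraMap]
    convert h1.symm using 2
    all_goals rfl
  have hMdet : ∀ μ : ℂ, (algebraMap ℂ (Matrix (Fin n) (Fin n) ℂ) μ - M.map ι).det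
      = (χ.roots.map (fun l => μ - f l)).prod := by
    intro μ
    have hcont : Continuous (fun A : Matrix (Fin n) (Fin n) ℝ =>
        (algebraMap ℂ (Matrix (Fin n) (Fin n) ℂ) μ - A.map ι).det) := by
      apply Continuous.matrix_det
      exact continuous_const.sub (continuous_id.matrix_map (continuous_algebraMap ℝ ℂ))
    have h1 := (hcont.tendsto M).comp (hlim P hconv)
    have h2 : ∀ i, (algebraMap ℂ (Matrix (Fin n) (Fin n) ℂ) μ - (Polynomial.aeval L (P i)).map ι).det
        = (χ.roots.map (fun l => μ - Polynomial.aeval l (P i))).prod := by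
      intro i
      rw [hmapaeval, show algebraMap ℂ (Matrix (Fin n) (Fin n) ℂ) μ
            - Polynomial.aeval Lc ((P i).map ι)
          = Polynomial.aeval Lc (C μ - (P i).map ι) by rw [map_sub, aeval_C],
        det_aeval_eq_prod]
      congr 1
      apply Multiset.map_congr rfl
      intro l _
      rw [eval_sub, eval_C, Polynomial.eval_map, ← Polynomial.aeval_def]
    have h3 : Tendsto (fun i => (χ.roots.map (fun l => μ - Polynomial.aeval l (P i))).prod)
        atTop (nhds ((χ.roots.map (fun l => μ - f l)).prod)) := by
      simp only [Finset.prod_multiset_map_count]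
      apply tendsto_finset_prod
      intro l hl
      have hlK : l ∈ K := interior_subset (hrootsK l (Multiset.mem_toFinset.mp hl))
      exact (tendsto_const_nhds.sub (hconv.tendsto_at hlK)).pow _
    refine tendsto_nhds_unique ?_ h3
    simp only [Function.comp_def, h2] at h1
    exact h1
  refine ⟨M, hlim P hconv, fun Q hQ => hlim Q hQ, ?_⟩
  ext μ
  have hmem : μ ∈ spectrum ℂ (M.map ι) ↔
      (algebraMap ℂ (Matrix (Fin n) (Fin n) ℂ) μ - M.map ι).det = 0 := by
    rw [spectrum.mem_iff, Matrix.isUnit_iff_isUnit_det, isUnit_iff_ne_zero, not_not]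
  rw [hmem, hMdet, Multiset.prod_eq_zero_iff]
  simp only [Set.mem_image]
  constructor
  · intro h
    obtain ⟨l, hl, hval⟩ := Multiset.mem_map.mp h
    exact ⟨l, by rw [hspecroots]; exact hl, (sub_eq_zero.mp hval).symm⟩
  · rintro ⟨l, hl, hval⟩
    refine Multiset.mem_map.mpr ⟨l, by rw [hspecroots] at hl; exact hl, by simp [hval]⟩
end
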